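/- arXiv:2007.04858 — 5 statements merged into one kernel-verified Lean document; each statement's English description precedes it below -/
import Mathlib

section
/- Let A ∈ ℝ^{n×n} be symmetric positive semidefinite, r < n, and let J ⊆ {1,…,n} with |J| = r and A(J,J) invertible. Suppose J is locally optimal for the volume, i.e. |det(A(Ĵ,Ĵ))| ≤ |det(A(J,J))| for every index set Ĵ ⊆ {1,…,n} with |Ĵ| = r and |J ∩ Ĵ| = r−1. Then the cross approximation A_J satisfies ‖A − A_J‖_max ≤ (r+1)·σ_{r+1}(A). -/
open Matrix Finset

/-- Cross approximation `A_J = A(:,J) A(J,J)⁻¹ A(J,:)` built on the principal submatrix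
indexed by the finite index set `J`. -/
noncomputable def crossApprox {n : ℕ} (A : Matrix (Fin n) (Fin n) ℝ) (J : Finset (Fin n)) :
    Matrix (Fin n) (Fin n) ℝ :=
  A.submatrix id (Subtype.val : J → Fin n) *
    (A.submatrix (Subtype.val : J → Fin n) (Subtype.val : J → Fin n))⁻¹ *
    A.submatrix (Subtype.val : J → Fin n) id

/-- Determinant of the principal submatrix `A(J,J)`. -/
noncomputable def pminor {n : ℕ} (A : Matrix (Fin n) (Fin n) ℝ) (J : Finset (Fin n)) : ℝ :=
  (A.submatrix (Subtype.val : J → Fin n) (Subtype.val : J → Fin n)).det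

/-- Nuclear norm: sum of the singular values of `M`, i.e. of the square roots of the
eigenvalues of `Mᴴ M`. -/
noncomputable def nuclearNorm {n : ℕ} (M : Matrix (Fin n) (Fin n) ℝ) : ℝ :=
  ∑ i, Real.sqrt ((Matrix.isHermitian_conjTranspose_mul_self M).eigenvalues i)

/-- Frobenius norm. -/
noncomputable def frobNorm {n : ℕ} (M : Matrix (Fin n) (Fin n) ℝ) : ℝ :=
  Real.sqrt (∑ i, ∑ j, (M i j) ^ 2)

/-- Spectral norm: the largest singular value. -/
noncomputable def specNorm {n : ℕ} (M : Matrix (Fin n) (Fin n) ℝ) : ℝ :=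
  ⨆ i, Real.sqrt ((Matrix.isHermitian_conjTranspose_mul_self M).eigenvalues i)

/-- Max norm: largest magnitude of an entry. -/
noncomputable def maxNorm {n : ℕ} (M : Matrix (Fin n) (Fin n) ℝ) : ℝ :=
  ⨆ i, ⨆ j, |M i j|

/-- The tuple `f` sorted in nonincreasing order. -/
noncomputable def sortedDesc {m : ℕ} (f : Fin m → ℝ) : Fin m → ℝ :=
  fun i => -(((fun j => -f j) ∘ Tuple.sort fun j => -f j) i)

/-- `Esum M k` is the sum of all `k × k` principal minors of `M`. -/
noncomputable def Esum {n : ℕ} (M : Matrix (Fin n) (Fin n) ℝ) (k : ℕ) : ℝ :=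
  ∑ K ∈ Finset.powersetCard k (Finset.univ : Finset (Fin n)), pminor M K


section Aux

lemma psd_quad {ι : Type*} [Fintype ι] {M : Matrix ι ι ℝ} (hM : M.PosSemidef) (x : ι → ℝ) :
    0 ≤ x ⬝ᵥ (M *ᵥ x) := by simpa using hM.dotProduct_mulVec_nonneg x

lemma psd_diag {ι : Type*} [Fintype ι] [DecidableEq ι] {M : Matrix ι ι ℝ} (hM : M.PosSemidef)
    (i : ι) : 0 ≤ M i i := by
  simpa [dotProduct_single, mulVec_single] using psd_quad hM (Pi.single i 1)

lemma psd_offdiag {ι : Type*} [Fintype ι] [DecidableEq ι] {M : Matrix ι ι ℝ} (hM : M.PosSemidef)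
    (i j : ι) : |M i j| ≤ (M i i + M j j) / 2 := by
  rcases eq_or_ne i j with rfl | hij
  · rw [abs_of_nonneg (psd_diag hM i)]; linarith [psd_diag hM i]
  · have hsym : M j i = M i j := by
      have := congrFun (congrFun hM.1 i) j
      simpa [conjTranspose_apply] using this
    have h1 := psd_quad hM (Pi.single i 1 + Pi.single j 1)
    have h2 := psd_quad hM (Pi.single i 1 - Pi.single j 1)
    simp only [mulVec_add, mulVec_sub, mulVec_single_one, col_apply, dotProduct_add, dotProduct_sub,
      add_dotProduct, sub_dotProduct, dotProduct_single, single_dotProduct, mul_one,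
      Pi.add_apply, Pi.sub_apply, one_mul] at h1 h2
    rw [abs_le]
    constructor <;> [skip; skip] <;> nlinarith [h1, h2, hsym]

/-- equiv splitting off one element -/
def splitOff {ι : Type*} [DecidableEq ι] (j : ι) : {k : ι // k ≠ j} ⊕ Unit ≃ ι where
  toFun := Sum.elim Subtype.val (fun _ => j)
  invFun k := if h : k = j then Sum.inr () else Sum.inl ⟨k, h⟩
  left_inv x := by
    rcases x with ⟨k, hk⟩ | u
    · simp [hk]
    · simp
  right_inv k := by
    by_cases h : k = j <;> simp [h]

lemma adjugate_diag_eq {ι : Type*} [Fintype ι] [DecidableEq ι] (B : Matrix ι ι ℝ) (j : ι) :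
    adjugate B j j = (B.submatrix (Subtype.val : {k : ι // k ≠ j} → ι) Subtype.val).det := by
  classical
  set e := splitOff j with he
  have h1 : adjugate (B.submatrix e e) (Sum.inr ()) (Sum.inr ()) = adjugate B j j := by
    rw [adjugate_submatrix_equiv_self]
    rfl
  rw [← h1, adjugate_apply]
  have h2 : (B.submatrix e e).updateRow (Sum.inr ()) (Pi.single (Sum.inr ()) 1) =
      fromBlocks (B.submatrix (Subtype.val : {k : ι // k ≠ j} → ι) Subtype.val)
        (Matrix.of fun k (_ : Unit) => B k.1 j) 0 1 := by
    ext a b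
    rcases a with a | a
    · rw [updateRow_ne (by simp)]
      rcases b with b | b <;> simp [he, fromBlocks, splitOff]
    · rcases a with ⟨⟩
      rw [updateRow_self]
      rcases b with b | b
      · simp [fromBlocks, Pi.single_apply]
      · rcases b with ⟨⟩
        simp [fromBlocks, Pi.single_apply, one_apply]
  rw [h2, det_fromBlocks_zero₂₁]
  simp

lemma trace_adjugate_eq {ι : Type*} [Fintype ι] [DecidableEq ι] {B : Matrix ι ι ℝ}
    (hB : B.IsHermitian) :
    (adjugate B).trace = ∑ i, ∏ k ∈ Finset.univ.erase i, hB.eigenvalues k := by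
  set U : Matrix ι ι ℝ := (hB.eigenvectorUnitary : Matrix ι ι ℝ) with hU
  have hUU : star U * U = 1 := by
    exact Unitary.coe_star_mul_self hB.eigenvectorUnitary
  have hD : Matrix.diagonal ((RCLike.ofReal : ℝ → ℝ) ∘ hB.eigenvalues)
      = Matrix.diagonal hB.eigenvalues := by
    congr 1
  have hspec : B = U * Matrix.diagonal hB.eigenvalues * star U := by
    conv_lhs => rw [hB.spectral_theorem]
    rw [hD]; rfl
  calc (adjugate B).trace
      = (adjugate (U * Matrix.diagonal hB.eigenvalues * star U)).trace := by rw [← hspec]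
    _ = (adjugate (star U) * (adjugate (Matrix.diagonal hB.eigenvalues) * adjugate U)).trace := by
        rw [adjugate_mul_distrib, adjugate_mul_distrib]
    _ = ((adjugate (Matrix.diagonal hB.eigenvalues) * adjugate U) * adjugate (star U)).trace := by
        rw [trace_mul_comm]
    _ = (adjugate (Matrix.diagonal hB.eigenvalues) * (adjugate U * adjugate (star U))).trace := by
        rw [Matrix.mul_assoc]
    _ = (adjugate (Matrix.diagonal hB.eigenvalues)).trace := by
        rw [← adjugate_mul_distrib, hUU, adjugate_one, Matrix.mul_one]
    _ = ∑ i, ∏ k ∈ Finset.univ.erase i, hB.eigenvalues k := by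
        rw [adjugate_diagonal, trace_diagonal]

lemma psd_quad_lower {ι : Type*} [Fintype ι] [DecidableEq ι] {B : Matrix ι ι ℝ}
    (hB : B.PosSemidef) {c : ℝ} (hc : ∀ i, c ≤ hB.1.eigenvalues i) (x : ι → ℝ) :
    c * (x ⬝ᵥ x) ≤ x ⬝ᵥ (B *ᵥ x) := by
  set U : Matrix ι ι ℝ := (hB.1.eigenvectorUnitary : Matrix ι ι ℝ) with hU
  have hUU : U * star U = 1 := by
    exact Unitary.coe_mul_star_self hB.1.eigenvectorUnitary
  have hD : Matrix.diagonal ((RCLike.ofReal : ℝ → ℝ) ∘ hB.1.eigenvalues)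
      = Matrix.diagonal hB.1.eigenvalues := by congr 1
  have hspec : B = U * Matrix.diagonal hB.1.eigenvalues * star U := by
    conv_lhs => rw [hB.1.spectral_theorem]
    rw [hD]; rfl
  have hsub : B - c • (1 : Matrix ι ι ℝ) =
      U * Matrix.diagonal (fun i => hB.1.eigenvalues i - c) * star U := by
    have h1 : c • (1 : Matrix ι ι ℝ) = U * (c • (1 : Matrix ι ι ℝ)) * star U := by
      rw [Matrix.mul_smul, Matrix.smul_mul, Matrix.mul_one, hUU]
    conv_lhs => rw [hspec]
    conv_lhs => rw [h1]
    rw [← Matrix.sub_mul, ← Matrix.mul_sub]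
    congr 2
    rw [← Matrix.diagonal_one, ← Matrix.diagonal_smul, Matrix.diagonal_sub]
    simp
  have hpsd : (B - c • (1 : Matrix ι ι ℝ)).PosSemidef := by
    rw [hsub]
    have hdiag : (Matrix.diagonal (fun i => hB.1.eigenvalues i - c)).PosSemidef :=
      Matrix.PosSemidef.diagonal (fun i => by simpa using hc i)
    have := hdiag.mul_mul_conjTranspose_same U
    rwa [← Matrix.star_eq_conjTranspose] at this
  have h0 := psd_quad hpsd x
  rw [Matrix.sub_mulVec, dotProduct_sub, Matrix.smul_mulVec, Matrix.one_mulVec,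
    dotProduct_smul, smul_eq_mul, sub_nonneg] at h0
  exact h0


lemma exists_lowvec {n r : ℕ} (hrn : r < n) {A : Matrix (Fin n) (Fin n) ℝ} (hA : A.PosSemidef)
    (K : Finset (Fin n)) (hK : K.card = r + 1) :
    ∃ x : Fin n → ℝ, x ≠ 0 ∧ (∀ k, k ∉ K → x k = 0) ∧
      x ⬝ᵥ (A *ᵥ x) ≤ sortedDesc hA.1.eigenvalues ⟨r, hrn⟩ * (x ⬝ᵥ x) := by
  classical
  set lam := hA.1.eigenvalues with hlam
  set π : Equiv.Perm (Fin n) := Tuple.sort (fun j => -(lam j)) with hπ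
  have hσ : sortedDesc lam ⟨r, hrn⟩ = lam (π ⟨r, hrn⟩) := by
    simp [sortedDesc, hπ]
  set σ := lam (π ⟨r, hrn⟩) with hσdef
  have hmono : ∀ a b : Fin n, a ≤ b → lam (π b) ≤ lam (π a) := by
    intro a b hab
    have := Tuple.monotone_sort (fun j => -(lam j)) hab
    simpa [hπ] using this
  set U : Matrix (Fin n) (Fin n) ℝ := (hA.1.eigenvectorUnitary : Matrix (Fin n) (Fin n) ℝ)
    with hU
  have hUU : U * star U = 1 := Unitary.coe_mul_star_self hA.1.eigenvectorUnitary
  -- the linear map whose kernel provides the vector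
  set L : (↥K → ℝ) →ₗ[ℝ] (Fin r → ℝ) :=
    { toFun := fun c => fun t => ∑ k : ↥K, U k.1 (π (Fin.castLE hrn.le t)) * c k
      map_add' := by
        intro a b; funext t; simp [mul_add, Finset.sum_add_distrib]
      map_smul' := by
        intro m a; funext t; simp [Finset.mul_sum, mul_left_comm] } with hL
  have hnotinj : ¬ Function.Injective L := by
    intro hinj
    have h1 := LinearMap.finrank_le_finrank_of_injective hinj
    rw [Module.finrank_pi, Module.finrank_pi] at h1
    simp only [Fintype.card_coe, Fintype.card_fin, hK] at h1
    omega
  obtain ⟨a, b, hab, hne⟩ := Function.not_injective_iff.mp hnotinj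
  set c : ↥K → ℝ := a - b with hcdef
  have hc : c ≠ 0 := sub_ne_zero.mpr hne
  have hLc : L c = 0 := by rw [map_sub, hab, sub_self]
  set x : Fin n → ℝ := fun k => if h : k ∈ K then c ⟨k, h⟩ else 0 with hx
  have hxK : ∀ k, k ∉ K → x k = 0 := fun k hk => dif_neg hk
  have hxat : ∀ k : ↥K, x k.1 = c k := fun k => dif_pos k.2
  have hx0 : x ≠ 0 := by
    obtain ⟨i, hi⟩ := Function.ne_iff.mp hc
    intro h
    apply hi
    have := congrFun h i.1
    rwa [hxat i] at this
  set z : Fin n → ℝ := star U *ᵥ x with hz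
  have hzvm : z = x ᵥ* U := by
    rw [hz, star_eq_conjTranspose, conjTranspose_eq_transpose_of_trivial, mulVec_transpose]
  have hzsum : ∀ j, z j = ∑ k : ↥K, U k.1 j * c k := by
    intro j
    rw [hzvm]
    show ∑ k, x k * U k j = _
    calc ∑ k, x k * U k j = ∑ k ∈ K, x k * U k j :=
          (Finset.sum_subset K.subset_univ (fun k _ hk => by rw [hxK k hk, zero_mul])).symm
      _ = ∑ k : ↥K, x k.1 * U k.1 j := (Finset.sum_coe_sort K (fun k => x k * U k j)).symm
      _ = ∑ k : ↥K, U k.1 j * c k :=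
          Finset.sum_congr rfl (fun k _ => by rw [hxat k, mul_comm])
  have hz0 : ∀ j : Fin n, (π.symm j).1 < r → z j = 0 := by
    intro j hj
    have ht := congrFun hLc ⟨(π.symm j).1, hj⟩
    have hcast : Fin.castLE hrn.le ⟨(π.symm j).1, hj⟩ = π.symm j := by
      apply Fin.ext; rfl
    rw [hzsum j]
    simpa [hL, hcast] using ht
  have hD : Matrix.diagonal ((RCLike.ofReal : ℝ → ℝ) ∘ lam) = Matrix.diagonal lam := by congr 1
  have hspec : A = U * Matrix.diagonal lam * star U := by
    conv_lhs => rw [hA.1.spectral_theorem]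
    rw [hD]; rfl
  have hAx : x ⬝ᵥ (A *ᵥ x) = z ⬝ᵥ (Matrix.diagonal lam *ᵥ z) := by
    conv_lhs => rw [hspec]
    rw [← Matrix.mulVec_mulVec, ← Matrix.mulVec_mulVec, dotProduct_mulVec, ← hzvm, ← hz]
  have hxx : x ⬝ᵥ x = z ⬝ᵥ z := by
    have h1 : (x ᵥ* U) ⬝ᵥ (star U *ᵥ x) = x ⬝ᵥ x := by
      rw [← dotProduct_mulVec, Matrix.mulVec_mulVec, hUU, Matrix.one_mulVec]
    calc x ⬝ᵥ x = (x ᵥ* U) ⬝ᵥ (star U *ᵥ x) := h1.symm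
      _ = z ⬝ᵥ z := by rw [← hzvm, ← hz]
  have hquad : z ⬝ᵥ (Matrix.diagonal lam *ᵥ z) = ∑ j, lam j * z j ^ 2 := by
    simp only [dotProduct, mulVec_diagonal]
    exact Finset.sum_congr rfl fun j _ => by ring
  have hzz : z ⬝ᵥ z = ∑ j, z j ^ 2 := by simp [dotProduct, sq]
  refine ⟨x, hx0, hxK, ?_⟩
  rw [hσ, hAx, hquad, hxx, hzz]
  calc ∑ j, lam j * z j ^ 2 = ∑ i, lam (π i) * z (π i) ^ 2 :=
        (Equiv.sum_comp π (fun j => lam j * z j ^ 2)).symm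
    _ ≤ ∑ i, σ * z (π i) ^ 2 := by
        refine Finset.sum_le_sum fun i _ => ?_
        by_cases h : i.1 < r
        · have hzi : z (π i) = 0 := hz0 (π i) (by rw [Equiv.symm_apply_apply]; exact h)
          simp [hzi]
        · have hle : lam (π i) ≤ σ := hmono ⟨r, hrn⟩ i (by
            rw [Fin.le_def]; simp; omega)
          exact mul_le_mul_of_nonneg_right hle (sq_nonneg _)
    _ = σ * ∑ i, z (π i) ^ 2 := (Finset.mul_sum _ _ _).symm
    _ = σ * ∑ j, z j ^ 2 := by rw [Equiv.sum_comp π (fun j => z j ^ 2)]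



section
variable {n : ℕ} (A : Matrix (Fin n) (Fin n) ℝ) (J : Finset (Fin n))

lemma crossApprox_apply (a b : Fin n) :
    crossApprox A J a b = ∑ k : ↥J, ∑ l : ↥J,
      A a k.1 * (A.submatrix (Subtype.val : J → Fin n) Subtype.val)⁻¹ k l * A l.1 b := by
  rw [crossApprox, Matrix.mul_apply]
  simp_rw [Matrix.mul_apply, Finset.sum_mul]
  rw [Finset.sum_comm]
  simp [mul_assoc]

lemma crossApprox_row (hJinv : pminor A J ≠ 0) {i : Fin n} (hi : i ∈ J) (j : Fin n) :
    crossApprox A J i j = A i j := by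
  classical
  set A11 := A.submatrix (Subtype.val : J → Fin n) Subtype.val with hA11
  have h1 : A11 * A11⁻¹ = 1 := Matrix.mul_nonsing_inv _ (isUnit_iff_ne_zero.mpr hJinv)
  rw [crossApprox_apply]
  calc ∑ k : ↥J, ∑ l : ↥J, A i ↑k * A11⁻¹ k l * A ↑l j
      = ∑ l : ↥J, (A11 * A11⁻¹) ⟨i, hi⟩ l * A ↑l j := by
        rw [Finset.sum_comm]
        refine Finset.sum_congr rfl fun l _ => ?_
        rw [Matrix.mul_apply, Finset.sum_mul]
        rfl
    _ = A i j := by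
        erw [h1]
        simp [Matrix.one_apply]

lemma psd_posdef {ι : Type*} [Fintype ι] [DecidableEq ι] {M : Matrix ι ι ℝ}
    (hM : M.PosSemidef) (hdet : M.det ≠ 0) : M.PosDef := by
  exact hM.posDef_iff_det_ne_zero.mpr hdet


/-- equiv `↥J ⊕ Unit ≃ ↥(insert i J)` for `i ∉ J`. -/
def insEquiv {i : Fin n} (hi : i ∉ J) : ↥J ⊕ Unit ≃ ↥(insert i J) where
  toFun := Sum.elim (fun k => ⟨k.1, Finset.mem_insert_of_mem k.2⟩)
    (fun _ => ⟨i, Finset.mem_insert_self i J⟩)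
  invFun x := if h : x.1 ∈ J then Sum.inl ⟨x.1, h⟩ else Sum.inr ()
  left_inv x := by
    rcases x with k | u
    · simp [k.2]
    · simp [hi]
  right_inv x := by
    by_cases h : x.1 ∈ J
    · simp [h]
    · have : x.1 = i := by
        rcases Finset.mem_insert.mp x.2 with h' | h'
        · exact h'
        · exact absurd h' h
      simp only [h, dite_false]
      exact Subtype.ext this.symm

lemma det_insert (hJinv : pminor A J ≠ 0) {i : Fin n} (hi : i ∉ J) :
    pminor A (insert i J) = pminor A J * ((A - crossApprox A J) i i) := by
  classical
  set A11 := A.submatrix (Subtype.val : J → Fin n) Subtype.val with hA11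
  haveI : Invertible A11 := A11.invertibleOfIsUnitDet (isUnit_iff_ne_zero.mpr hJinv)
  set e := insEquiv J hi with he
  have h1 : pminor A (insert i J) =
      ((A.submatrix (Subtype.val : ↥(insert i J) → Fin n) Subtype.val).submatrix e e).det :=
    by unfold pminor; exact (Matrix.det_submatrix_equiv_self e _).symm
  have h2 : (A.submatrix (Subtype.val : ↥(insert i J) → Fin n) Subtype.val).submatrix e e =
      Matrix.fromBlocks A11 (Matrix.of fun k (_ : Unit) => A k.1 i)
        (Matrix.of fun (_ : Unit) l => A i l.1) (Matrix.of fun (_ : Unit) (_ : Unit) => A i i) := by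
    ext a b
    rcases a with a | a <;> rcases b with b | b <;>
      simp [he, insEquiv, Matrix.fromBlocks, hA11]
  rw [h1, h2, Matrix.det_fromBlocks₁₁]
  congr 1
  rw [Matrix.det_unique]
  simp only [Matrix.sub_apply, Matrix.of_apply]
  congr 1
  rw [crossApprox_apply, Matrix.invOf_eq_nonsing_inv]
  rw [Matrix.mul_apply]
  rw [Finset.sum_comm]
  refine Finset.sum_congr rfl fun l _ => ?_
  rw [Matrix.mul_apply, Finset.sum_mul]
  rfl


lemma crossApprox_col (hJinv : pminor A J ≠ 0) {j : Fin n} (hj : j ∈ J) (i : Fin n) :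
    crossApprox A J i j = A i j := by
  classical
  set A11 := A.submatrix (Subtype.val : J → Fin n) Subtype.val with hA11
  have h1 : A11⁻¹ * A11 = 1 := Matrix.nonsing_inv_mul _ (isUnit_iff_ne_zero.mpr hJinv)
  rw [crossApprox_apply]
  calc ∑ k : ↥J, ∑ l : ↥J, A i ↑k * A11⁻¹ k l * A ↑l j
      = ∑ k : ↥J, A i ↑k * (A11⁻¹ * A11) k ⟨j, hj⟩ := by
        refine Finset.sum_congr rfl fun k _ => ?_
        rw [Matrix.mul_apply, Finset.mul_sum]
        refine Finset.sum_congr rfl fun l _ => ?_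
        rw [mul_assoc]
        rfl
    _ = A i j := by
        erw [h1]
        simp [Matrix.one_apply]

lemma sub_crossApprox_posSemidef (hA : A.PosSemidef) (hJinv : pminor A J ≠ 0) :
    (A - crossApprox A J).PosSemidef := by
  classical
  set A11 := A.submatrix (Subtype.val : J → Fin n) Subtype.val with hA11
  haveI : Invertible A11 := A11.invertibleOfIsUnitDet (isUnit_iff_ne_zero.mpr hJinv)
  have hpd : A11.PosDef := psd_posdef (hA.submatrix _) hJinv
  set ec : {x // x ∈ J} ⊕ {x // ¬ x ∈ J} ≃ Fin n := Equiv.sumCompl (fun x => x ∈ J) with hec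
  set A12 := A.submatrix (Subtype.val : {x // x ∈ J} → Fin n)
    (Subtype.val : {x // ¬ x ∈ J} → Fin n) with hA12
  set A22 := A.submatrix (Subtype.val : {x // ¬ x ∈ J} → Fin n)
    (Subtype.val : {x // ¬ x ∈ J} → Fin n) with hA22
  have hsym : ∀ a b : Fin n, A b a = A a b := fun a b => by
    have := congrFun (congrFun hA.1 a) b
    simpa [Matrix.conjTranspose_apply] using this
  have hblocks : A.submatrix ec ec = Matrix.fromBlocks A11 A12 A12ᴴ A22 := by
    ext a b
    rcases a with a | a <;> rcases b with b | b
    · simp [hec, Matrix.fromBlocks, hA11]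
    · simp [hec, Matrix.fromBlocks, hA12]
    · simp only [Matrix.submatrix_apply, Matrix.fromBlocks, Matrix.of_apply, Sum.elim_inr,
        Sum.elim_inl, Matrix.conjTranspose_apply, hA12, hec]
      simp [hsym]
    · simp [hec, Matrix.fromBlocks, hA22]
  have hS : (A22 - A12ᴴ * A11⁻¹ * A12).PosSemidef := by
    rw [← Matrix.PosDef.fromBlocks₁₁ A12 A22 hpd, ← hblocks]
    exact hA.submatrix ec
  obtain ⟨C, hC⟩ : ∃ C, A22 - A12ᴴ * A11⁻¹ * A12 = Cᴴ * C := by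
    open scoped MatrixOrder in exact CStarAlgebra.nonneg_iff_eq_star_mul_self.mp hS.nonneg
  have hfull : (Matrix.fromBlocks (0 : Matrix {x // x ∈ J} {x // x ∈ J} ℝ) 0 0
      (A22 - A12ᴴ * A11⁻¹ * A12)).PosSemidef := by
    have heq : Matrix.fromBlocks (0 : Matrix {x // x ∈ J} {x // x ∈ J} ℝ) 0 0
        (A22 - A12ᴴ * A11⁻¹ * A12)
        = (Matrix.fromBlocks 0 0 0 C)ᴴ * (Matrix.fromBlocks 0 0 0 C) := by
      rw [Matrix.fromBlocks_conjTranspose, Matrix.fromBlocks_multiply]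
      simp only [Matrix.conjTranspose_zero, Matrix.mul_zero, Matrix.zero_mul, add_zero, zero_add,
        ← hC]
    rw [heq]
    exact Matrix.posSemidef_conjTranspose_mul_self _
  have hEs : (A - crossApprox A J).submatrix ec ec
      = Matrix.fromBlocks (0 : Matrix {x // x ∈ J} {x // x ∈ J} ℝ) 0 0
        (A22 - A12ᴴ * A11⁻¹ * A12) := by
    ext a b
    rcases a with a | a <;> rcases b with b | b
    · simp [hec, Matrix.fromBlocks, crossApprox_row A J hJinv a.2]
    · simp [hec, Matrix.fromBlocks, crossApprox_row A J hJinv a.2]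
    · simp [hec, Matrix.fromBlocks, crossApprox_col A J hJinv b.2]
    · simp only [hec, Matrix.submatrix_apply, Matrix.sub_apply, Matrix.fromBlocks, Matrix.of_apply,
        Sum.elim_inr, Equiv.sumCompl_apply_inr]
      congr 1
      rw [crossApprox_apply, Matrix.mul_apply, Finset.sum_comm]
      refine Finset.sum_congr rfl fun l _ => ?_
      rw [Matrix.mul_apply, Finset.sum_mul]
      refine Finset.sum_congr rfl fun k _ => ?_
      simp only [hA12, Matrix.conjTranspose_apply, Matrix.submatrix_apply, hA11]
      rw [hsym]
      rfl
  have hpsd : ((A - crossApprox A J).submatrix ec ec).PosSemidef := by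
    rw [hEs]; exact hfull
  exact (Matrix.posSemidef_submatrix_equiv ec).mp hpsd

end



/-- subtype-of-subtype equiv -/
def eraseEquiv {n : ℕ} (K : Finset (Fin n)) (k : ↥K) :
    {x : ↥K // x ≠ k} ≃ ↥(K.erase k.1) where
  toFun x := ⟨x.1.1, Finset.mem_erase.mpr ⟨fun h => x.2 (Subtype.ext h), x.1.2⟩⟩
  invFun y := ⟨⟨y.1, Finset.mem_of_mem_erase y.2⟩,
    fun h => (Finset.mem_erase.mp y.2).1 (congrArg Subtype.val h)⟩
  left_inv x := rfl
  right_inv y := rfl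

lemma adjugate_diag_pminor {n : ℕ} (A : Matrix (Fin n) (Fin n) ℝ) (K : Finset (Fin n)) (k : ↥K) :
    adjugate (A.submatrix (Subtype.val : K → Fin n) Subtype.val) k k
      = pminor A (K.erase k.1) := by
  rw [adjugate_diag_eq, Matrix.submatrix_submatrix]
  unfold pminor
  rw [← Matrix.det_submatrix_equiv_self (eraseEquiv K k)
    (A.submatrix (Subtype.val : ↥(K.erase k.1) → Fin n) Subtype.val)]
  rfl

end Aux

/-- If `A` is SPSD, `J` has cardinality `r < n`, `A(J,J)` is invertible and the
volume of `A(J,J)` is locally optimal (no single-index replacement increases `|det|`), then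
`‖A - A_J‖_max ≤ (r+1) σ_{r+1}(A)`, where `σ` are the eigenvalues of `A` sorted
nonincreasingly (0-based index `r` is the `(r+1)`-st singular value). -/
theorem cross_approx_maxNorm_of_locally_optimal {n r : ℕ} (hrn : r < n)
    (A : Matrix (Fin n) (Fin n) ℝ) (hA : A.PosSemidef)
    (J : Finset (Fin n)) (hJcard : J.card = r) (hJinv : pminor A J ≠ 0)
    (hloc : ∀ K : Finset (Fin n), K.card = r → (J ∩ K).card = r - 1 →
      |pminor A K| ≤ |pminor A J|) :
    maxNorm (A - crossApprox A J) ≤ (r + 1 : ℝ) * sortedDesc hA.1.eigenvalues ⟨r, hrn⟩ := by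
  classical
  set E := A - crossApprox A J with hE
  have hEpsd : E.PosSemidef := sub_crossApprox_posSemidef A J hA hJinv
  set σ := sortedDesc hA.1.eigenvalues ⟨r, hrn⟩ with hσ
  have hσ0 : 0 ≤ σ := by
    have h : σ = hA.1.eigenvalues ((Tuple.sort fun j => -hA.1.eigenvalues j) ⟨r, hrn⟩) := by
      simp [hσ, sortedDesc]
    rw [h]
    exact hA.eigenvalues_nonneg _
  have hpJ : 0 < pminor A J := (psd_posdef (hA.submatrix _) hJinv).det_pos
  have hRnn : 0 ≤ (r + 1 : ℝ) * σ := by positivity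
  have hdiag : ∀ i, E i i ≤ (r + 1 : ℝ) * σ := by
    intro i
    by_cases hi : i ∈ J
    · have h0 : E i i = 0 := by
        rw [hE, Matrix.sub_apply, crossApprox_row A J hJinv hi i, sub_self]
      rw [h0]; exact hRnn
    · set K := insert i J with hK
      have hKcard : K.card = r + 1 := by rw [hK, Finset.card_insert_of_notMem hi, hJcard]
      set B := A.submatrix (Subtype.val : K → Fin n) Subtype.val with hB
      have hBpsd : B.PosSemidef := hA.submatrix _
      set μ := hBpsd.1.eigenvalues with hμ
      haveI : Nonempty ↥K := ⟨⟨i, Finset.mem_insert_self i J⟩⟩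
      obtain ⟨i0, -, hi0⟩ := Finset.exists_min_image Finset.univ μ Finset.univ_nonempty
      have hμ0 : ∀ j, 0 ≤ μ j := hBpsd.eigenvalues_nonneg
      have hdet : B.det = ∏ j, μ j := by
        have h := hBpsd.1.det_eq_prod_eigenvalues
        simpa using h
      have htr : (adjugate B).trace = ∑ j, ∏ k ∈ Finset.univ.erase j, μ k :=
        trace_adjugate_eq hBpsd.1
      have hb : B.det ≤ μ i0 * (adjugate B).trace := by
        rw [hdet, htr, ← Finset.mul_prod_erase Finset.univ μ (Finset.mem_univ i0)]
        refine mul_le_mul_of_nonneg_left ?_ (hμ0 i0)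
        exact Finset.single_le_sum (f := fun j => ∏ k ∈ Finset.univ.erase j, μ k)
          (fun j _ => Finset.prod_nonneg fun k _ => hμ0 k) (Finset.mem_univ i0)
      have hterm : ∀ k : ↥K, adjugate B k k ≤ pminor A J := by
        intro k
        rw [hB, adjugate_diag_pminor]
        by_cases hk : k.1 = i
        · rw [hk, hK, Finset.erase_insert hi]
        · have hkJ : k.1 ∈ J := by
            rcases Finset.mem_insert.mp k.2 with h | h
            · exact absurd h hk
            · exact h
          have h1 : (K.erase k.1).card = r := by
            rw [Finset.card_erase_of_mem k.2, hKcard]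
            omega
          have hJK : J ∩ K.erase k.1 = J.erase k.1 := by
            ext a
            simp only [Finset.mem_inter, Finset.mem_erase, hK, Finset.mem_insert]
            constructor
            · rintro ⟨haJ, hak, -⟩; exact ⟨hak, haJ⟩
            · rintro ⟨hak, haJ⟩; exact ⟨haJ, hak, Or.inr haJ⟩
          have h2 : (J ∩ K.erase k.1).card = r - 1 := by
            rw [hJK, Finset.card_erase_of_mem hkJ, hJcard]
          calc pminor A (K.erase k.1) ≤ |pminor A (K.erase k.1)| := le_abs_self _
            _ ≤ |pminor A J| := hloc _ h1 h2
            _ = pminor A J := abs_of_pos hpJ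
      have hc : (adjugate B).trace ≤ (r + 1 : ℝ) * pminor A J := by
        calc (adjugate B).trace = ∑ k : ↥K, adjugate B k k := rfl
          _ ≤ ∑ _k : ↥K, pminor A J := Finset.sum_le_sum fun k _ => hterm k
          _ = (r + 1 : ℝ) * pminor A J := by
              rw [Finset.sum_const, Finset.card_univ, Fintype.card_coe, hKcard]
              push_cast
              ring
      have hdetE : pminor A K = pminor A J * E i i := det_insert A J hJinv hi
      have hpK : pminor A K = B.det := rfl
      -- interlacing
      obtain ⟨x, hx0, hxK, hxineq⟩ := exists_lowvec hrn hA K hKcard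
      set y : ↥K → ℝ := fun k => x k.1 with hy
      have hinner : ∀ k : Fin n, (A *ᵥ x) k = ∑ l : ↥K, A k l.1 * x l.1 := by
        intro k
        show ∑ l, A k l * x l = _
        calc ∑ l, A k l * x l = ∑ l ∈ K, A k l * x l :=
              (Finset.sum_subset K.subset_univ
                (fun l _ hl => by rw [hxK l hl, mul_zero])).symm
          _ = ∑ l : ↥K, A k l.1 * x l.1 := (Finset.sum_coe_sort _ _).symm
      have hxAx : x ⬝ᵥ (A *ᵥ x) = y ⬝ᵥ (B *ᵥ y) := by
        show ∑ k, x k * (A *ᵥ x) k = ∑ k : ↥K, y k * (B *ᵥ y) k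
        calc ∑ k, x k * (A *ᵥ x) k = ∑ k ∈ K, x k * (A *ᵥ x) k :=
              (Finset.sum_subset K.subset_univ
                (fun k _ hk => by rw [hxK k hk, zero_mul])).symm
          _ = ∑ k : ↥K, x k.1 * (A *ᵥ x) k.1 := (Finset.sum_coe_sort _ _).symm
          _ = ∑ k : ↥K, y k * (B *ᵥ y) k := by
              refine Finset.sum_congr rfl fun k _ => ?_
              rw [hinner k.1]
              rfl
      have hxx : x ⬝ᵥ x = y ⬝ᵥ y := by
        show ∑ k, x k * x k = ∑ k : ↥K, y k * y k
        calc ∑ k, x k * x k = ∑ k ∈ K, x k * x k :=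
              (Finset.sum_subset K.subset_univ
                (fun k _ hk => by rw [hxK k hk, zero_mul])).symm
          _ = ∑ k : ↥K, x k.1 * x k.1 := (Finset.sum_coe_sort _ _).symm
          _ = ∑ k : ↥K, y k * y k := rfl
      have hyy0 : 0 < y ⬝ᵥ y := by
        rw [← hxx]
        rcases lt_or_eq_of_le (Finset.sum_nonneg fun k _ => mul_self_nonneg (x k)) with h | h
        · exact h
        · exact absurd (dotProduct_self_eq_zero.mp h.symm) hx0
      have hlow := psd_quad_lower hBpsd (fun j => hi0 j (Finset.mem_univ j)) y
      have hμσ : μ i0 ≤ σ := by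
        have h1 : μ i0 * (y ⬝ᵥ y) ≤ σ * (y ⬝ᵥ y) := by
          calc μ i0 * (y ⬝ᵥ y) ≤ y ⬝ᵥ (B *ᵥ y) := hlow
            _ = x ⬝ᵥ (A *ᵥ x) := hxAx.symm
            _ ≤ σ * (x ⬝ᵥ x) := hxineq
            _ = σ * (y ⬝ᵥ y) := by rw [hxx]
        exact le_of_mul_le_mul_right h1 hyy0
      -- combine
      have hchain : pminor A J * E i i ≤ pminor A J * ((r + 1 : ℝ) * σ) := by
        calc pminor A J * E i i = B.det := by rw [← hdetE, hpK]
          _ ≤ μ i0 * (adjugate B).trace := hb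
          _ ≤ μ i0 * ((r + 1 : ℝ) * pminor A J) :=
              mul_le_mul_of_nonneg_left hc (hμ0 i0)
          _ ≤ σ * ((r + 1 : ℝ) * pminor A J) := by
              refine mul_le_mul_of_nonneg_right hμσ ?_
              positivity
          _ = pminor A J * ((r + 1 : ℝ) * σ) := by ring
      exact le_of_mul_le_mul_left hchain hpJ
  have hfinal : ∀ i j, |E i j| ≤ (r + 1 : ℝ) * σ := by
    intro i j
    calc |E i j| ≤ (E i i + E j j) / 2 := psd_offdiag hEpsd i j
      _ ≤ (r + 1 : ℝ) * σ := by linarith [hdiag i, hdiag j]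
  rw [maxNorm]
  exact Real.iSup_le (fun i => Real.iSup_le (fun j => hfinal i j) hRnn) hRnn
end

section
/- Let A ∈ ℝ^{n×n} be symmetric positive semidefinite and J ⊆ {1,…,n} with |J| = r such that A(J,J) is invertible. Then ‖A − A_J‖_* = Σ_{Ĵ : J ⊂ Ĵ, |Ĵ| = r+1} det(A(Ĵ,Ĵ)) / det(A(J,J)), where the sum ranges over all index sets Ĵ ⊆ {1,…,n} of cardinality r+1 containing J. -/
open Matrix Finset

open Polynomial in
lemma multiset_eq_of_diagonal_similar {n : ℕ} (d m : Fin n → ℝ)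
    (W : Matrix (Fin n) (Fin n) ℝ) (hW : IsUnit W.det)
    (h : Matrix.diagonal m = W * Matrix.diagonal d * W⁻¹) :
    (Finset.univ.val.map m) = (Finset.univ.val.map d) := by
  have key : ∀ x : ℝ, ∏ i, (m i - x) = ∏ i, (d i - x) := by
    intro x
    have h1 : Matrix.diagonal m - x • 1 = W * (Matrix.diagonal d - x • 1) * W⁻¹ := by
      rw [Matrix.mul_sub, Matrix.sub_mul, h]
      congr 1
      rw [Matrix.mul_smul, Matrix.smul_mul, Matrix.mul_one, Matrix.mul_nonsing_inv _ hW]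
    have h2 := congrArg Matrix.det h1
    rw [Matrix.det_mul, Matrix.det_mul, mul_comm, ← mul_assoc, ← Matrix.det_mul,
      Matrix.nonsing_inv_mul _ hW, Matrix.det_one, one_mul] at h2
    have e1 : ∀ f : Fin n → ℝ, Matrix.diagonal f - x • 1 = Matrix.diagonal (fun i => f i - x) := by
      intro f
      rw [Matrix.smul_one_eq_diagonal, Matrix.diagonal_sub]
    rw [e1, e1, Matrix.det_diagonal, Matrix.det_diagonal] at h2
    exact h2
  have hp : ∏ i, (X - C (m i)) = ∏ i, (X - C (d i)) := by
    apply Polynomial.funext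
    intro x
    simp only [eval_prod, eval_sub, eval_X, eval_C]
    have := key x  -- (m i - x) vs (x - m i): signs
    have hs : ∀ f : Fin n → ℝ, ∏ i, (x - f i) = (-1)^n * ∏ i, (f i - x) := by
      intro f
      have : ∀ i : Fin n, x - f i = (-1) * (f i - x) := by intro i; ring
      simp_rw [this]
      rw [Finset.prod_mul_distrib, Finset.prod_const, Finset.card_univ, Fintype.card_fin]
    rw [hs, hs, key x]
  have hr := congrArg Polynomial.roots hp
  rwa [show (∏ i, (X - C (m i))) = ((univ.val.map m).map fun a => X - C a).prod by
        rw [Multiset.map_map]; rfl,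
      show (∏ i, (X - C (d i))) = ((univ.val.map d).map fun a => X - C a).prod by
        rw [Multiset.map_map]; rfl,
      roots_multiset_prod_X_sub_C, roots_multiset_prod_X_sub_C] at hr


lemma nuclearNorm_psd_eq_trace {n : ℕ} (E : Matrix (Fin n) (Fin n) ℝ) (hE : E.PosSemidef) :
    nuclearNorm E = E.trace := by
  classical
  have h1 : E.IsHermitian := hE.1
  set U : Matrix (Fin n) (Fin n) ℝ := (h1.eigenvectorUnitary : Matrix (Fin n) (Fin n) ℝ) with hU
  set lam := h1.eigenvalues with hlam
  have hspec : E = U * diagonal (RCLike.ofReal ∘ lam) * star U := h1.spectral_theorem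
  have hco : (RCLike.ofReal ∘ lam : Fin n → ℝ) = lam := by
    funext i; simp [RCLike.ofReal]
  rw [hco] at hspec
  have hUU : star U * U = 1 := (Matrix.mem_unitaryGroup_iff').mp h1.eigenvectorUnitary.2
  have hUU' : U * star U = 1 := (Matrix.mem_unitaryGroup_iff).mp h1.eigenvectorUnitary.2
  -- Eᵀ * E = U * diagonal (lam * lam) * star U
  have hEt : Eᵀ = E := h1
  have hEE : Eᵀ * E = U * Matrix.diagonal (fun i => lam i * lam i) * star U := by
    rw [hEt]
    conv_lhs => rw [hspec]
    rw [← Matrix.diagonal_mul_diagonal]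
    simp only [Matrix.mul_assoc]
    rw [← Matrix.mul_assoc (star U) U, hUU, Matrix.one_mul]
  set h2 := Matrix.isHermitian_conjTranspose_mul_self E with hh2
  set mu := h2.eigenvalues with hmu
  set V : Matrix (Fin n) (Fin n) ℝ := (h2.eigenvectorUnitary : Matrix (Fin n) (Fin n) ℝ) with hV
  have hVV : star V * V = 1 := (Matrix.mem_unitaryGroup_iff').mp h2.eigenvectorUnitary.2
  have hVV' : V * star V = 1 := (Matrix.mem_unitaryGroup_iff).mp h2.eigenvectorUnitary.2
  have hdiagmu : Matrix.diagonal mu = star V * (Eᵀ * E) * V := by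
    have : star V * (Eᴴ * E) * V = Matrix.diagonal (RCLike.ofReal ∘ mu) := by
      have := Matrix.IsHermitian.conjStarAlgAut_star_eigenvectorUnitary h2
      rw [Unitary.conjStarAlgAut_apply, Unitary.coe_star, star_star] at this
      exact this
    have hco2 : (RCLike.ofReal ∘ mu : Fin n → ℝ) = mu := by funext i; simp [RCLike.ofReal]
    rw [hco2] at this
    exact this.symm
  set W := star V * U with hW
  have hWinv : W * (star U * V) = 1 := by
    rw [hW, Matrix.mul_assoc, ← Matrix.mul_assoc U, hUU', Matrix.one_mul, hVV]
  have hWunit : IsUnit W.det := Matrix.isUnit_det_of_right_inverse hWinv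
  have hWi : W⁻¹ = star U * V := Matrix.inv_eq_right_inv hWinv
  have hsim : Matrix.diagonal mu = W * Matrix.diagonal (fun i => lam i * lam i) * W⁻¹ := by
    rw [hdiagmu, hEE, hWi, hW]
    simp only [Matrix.mul_assoc]
  have hmult := multiset_eq_of_diagonal_similar _ _ W hWunit hsim
  -- now sums
  have hsum : ∑ i, Real.sqrt (mu i) = ∑ i, Real.sqrt (lam i * lam i) := by
    have : (Finset.univ.val.map (fun i => Real.sqrt (mu i))) =
        (Finset.univ.val.map (fun i => Real.sqrt (lam i * lam i))) := by
      have := congrArg (Multiset.map Real.sqrt) hmult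
      rwa [Multiset.map_map, Multiset.map_map] at this
    rw [Finset.sum, Finset.sum]
    rw [this]
  have hlamnn : ∀ i, 0 ≤ lam i := fun i => hE.eigenvalues_nonneg i
  have hsq : ∀ i, Real.sqrt (lam i * lam i) = lam i := by
    intro i; rw [Real.sqrt_mul_self (hlamnn i)]
  have htr : E.trace = ∑ i, lam i := by
    rw [hspec, Matrix.trace_mul_cycle, hUU, Matrix.one_mul, Matrix.trace_diagonal]
  rw [nuclearNorm, htr]
  exact hsum.trans (Finset.sum_congr rfl fun i _ => hsq i)

lemma crossApprox_row_mem {n : ℕ} (A : Matrix (Fin n) (Fin n) ℝ) (J : Finset (Fin n))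
    (hS : IsUnit (A.submatrix (Subtype.val : J → Fin n) (Subtype.val : J → Fin n)).det)
    {i : Fin n} (hi : i ∈ J) (j : Fin n) : crossApprox A J i j = A i j := by
  classical
  set S := A.submatrix (Subtype.val : J → Fin n) (Subtype.val : J → Fin n) with hSdef
  have hSS : S * S⁻¹ = 1 := Matrix.mul_nonsing_inv _ hS
  have key : ∀ l : J, (A.submatrix id (Subtype.val : J → Fin n) * S⁻¹) i l
      = (1 : Matrix J J ℝ) ⟨i, hi⟩ l := by
    intro l
    rw [← hSS, Matrix.mul_apply, Matrix.mul_apply]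
    rfl
  rw [crossApprox, Matrix.mul_apply]
  rw [Finset.sum_congr rfl (fun l _ => congrArg (· * A.submatrix (Subtype.val : J → Fin n) id l j) (key l))]
  simp only [Matrix.one_apply]
  simp [Finset.sum_ite_eq]

lemma residual_posSemidef {n : ℕ} (A : Matrix (Fin n) (Fin n) ℝ) (hA : A.PosSemidef)
    (J : Finset (Fin n))
    (hS : IsUnit (A.submatrix (Subtype.val : J → Fin n) (Subtype.val : J → Fin n)).det) :
    (A - crossApprox A J).PosSemidef := by
  classical
  obtain ⟨B, hB⟩ : ∃ B : Matrix (Fin n) (Fin n) ℝ, A = Bᴴ * B := by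
    open scoped MatrixOrder Matrix.Norms.L2Operator in
    exact CStarAlgebra.nonneg_iff_eq_star_mul_self.mp hA.nonneg
  set S := A.submatrix (Subtype.val : J → Fin n) (Subtype.val : J → Fin n) with hSdef
  set BJ := B.submatrix id (Subtype.val : J → Fin n) with hBJ
  have f1 : A.submatrix id (Subtype.val : J → Fin n) = Bᴴ * BJ := by
    subst hB; ext i k; simp [Matrix.mul_apply, hBJ]
  have f2 : A.submatrix (Subtype.val : J → Fin n) id = BJᴴ * B := by
    subst hB; ext i k; simp [Matrix.mul_apply, hBJ]
  have f3 : S = BJᴴ * BJ := by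
    subst hB; ext i k; simp [Matrix.mul_apply, hBJ, hSdef]
  have hSh : Sᴴ = S := (hA.1.submatrix _)
  set P := BJ * S⁻¹ * BJᴴ with hP
  have hPh : Pᴴ = P := by
    rw [hP, Matrix.conjTranspose_mul, Matrix.conjTranspose_mul,
      Matrix.conjTranspose_nonsing_inv, hSh, Matrix.conjTranspose_conjTranspose,
      Matrix.mul_assoc]
  have hP2 : P * P = P := by
    rw [hP]
    calc BJ * S⁻¹ * BJᴴ * (BJ * S⁻¹ * BJᴴ)
        = BJ * S⁻¹ * (BJᴴ * BJ) * (S⁻¹ * BJᴴ) := by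
          simp only [Matrix.mul_assoc]
      _ = BJ * (S⁻¹ * S * S⁻¹) * BJᴴ := by rw [← f3]; simp only [Matrix.mul_assoc]
      _ = BJ * S⁻¹ * BJᴴ := by rw [Matrix.nonsing_inv_mul _ hS, Matrix.one_mul]
  have hC : A - crossApprox A J = (B - P * B)ᴴ * (B - P * B) := by
    have expand : (B - P * B)ᴴ * (B - P * B)
        = Bᴴ * B - Bᴴ * (P * B) - Bᴴ * Pᴴ * B + Bᴴ * Pᴴ * (P * B) := by
      simp only [Matrix.conjTranspose_sub, Matrix.conjTranspose_mul]
      noncomm_ring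
    rw [expand, hPh]
    have h4 : Bᴴ * Pᴴ * (P * B) = Bᴴ * (P * B) := by
      rw [hPh, Matrix.mul_assoc, ← Matrix.mul_assoc P P B, hP2]
    rw [hPh] at h4
    rw [h4]
    have h5 : Bᴴ * P * B = Bᴴ * (P * B) := by rw [Matrix.mul_assoc]
    rw [h5]
    have h6 : Bᴴ * B - Bᴴ * (P * B) - Bᴴ * (P * B) + Bᴴ * (P * B)
        = Bᴴ * B - Bᴴ * (P * B) := by abel
    rw [h6, crossApprox, f1, f2, ← hSdef, hB, hP]
    simp only [Matrix.mul_assoc]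
  rw [hC]
  exact Matrix.posSemidef_conjTranspose_mul_self _

def insertEquiv {n : ℕ} (J : Finset (Fin n)) (i : Fin n) (hi : i ∉ J) :
    (↥J ⊕ Unit) ≃ ↥(insert i J : Finset (Fin n)) where
  toFun x := Sum.elim (fun j => ⟨j.1, Finset.mem_insert_of_mem j.2⟩)
    (fun _ => ⟨i, Finset.mem_insert_self i J⟩) x
  invFun x := if h : (x : Fin n) ∈ J then Sum.inl ⟨x, h⟩ else Sum.inr ()
  left_inv := by
    rintro (j | u)
    · simp
    · simp [hi]
  right_inv := by
    rintro ⟨x, hx⟩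
    rcases Finset.mem_insert.mp hx with h | h
    · subst h; simp [hi]
    · simp [h]

lemma pminor_insert {n : ℕ} (A : Matrix (Fin n) (Fin n) ℝ) (J : Finset (Fin n))
    (hS : IsUnit (A.submatrix (Subtype.val : J → Fin n) (Subtype.val : J → Fin n)).det)
    {i : Fin n} (hi : i ∉ J) :
    pminor A (insert i J) = pminor A J * ((A - crossApprox A J) i i) := by
  classical
  set S := A.submatrix (Subtype.val : J → Fin n) (Subtype.val : J → Fin n) with hSdef
  haveI : Invertible S := S.invertibleOfIsUnitDet hS
  set e := insertEquiv J i hi with he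
  have h1 : pminor A (insert i J)
      = ((A.submatrix (Subtype.val : ↥(insert i J : Finset (Fin n)) → Fin n)
          (Subtype.val : ↥(insert i J : Finset (Fin n)) → Fin n)).submatrix e e).det := by
    rw [Matrix.det_submatrix_equiv_self]; rfl
  have h2 : (A.submatrix (Subtype.val : ↥(insert i J : Finset (Fin n)) → Fin n)
          (Subtype.val : ↥(insert i J : Finset (Fin n)) → Fin n)).submatrix e e
      = Matrix.fromBlocks S (Matrix.of fun (j : J) (_ : Unit) => A j.1 i)
          (Matrix.of fun (_ : Unit) (j : J) => A i j.1)
          (Matrix.of fun (_ : Unit) (_ : Unit) => A i i) := by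
    ext x y
    rcases x with x | x <;> rcases y with y | y <;>
      simp [he, insertEquiv, Matrix.fromBlocks, hSdef]
  rw [h1, h2, Matrix.det_fromBlocks₁₁]
  congr 1
  rw [Matrix.det_unique]
  have : (crossApprox A J) i i
      = ((Matrix.of fun (_ : Unit) (j : J) => A i j.1) * ⅟S *
          (Matrix.of fun (j : J) (_ : Unit) => A j.1 i)) default default := by
    rw [Matrix.invOf_eq_nonsing_inv]
    simp [crossApprox, Matrix.mul_apply, hSdef]
  simp only [Matrix.sub_apply]
  rw [this]
  rfl

/-- For `A` SPSD and `J` with `|J| = r` and `A(J,J)` invertible,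
`‖A - A_J‖_* = ∑_{Ĵ ⊇ J, |Ĵ| = r+1} det A(Ĵ,Ĵ) / det A(J,J)`. -/
theorem nuclearNorm_residual_eq_sum_minor_ratios {n r : ℕ}
    (A : Matrix (Fin n) (Fin n) ℝ) (hA : A.PosSemidef)
    (J : Finset (Fin n)) (hJcard : J.card = r) (hJinv : pminor A J ≠ 0) :
    nuclearNorm (A - crossApprox A J) =
      ∑ K ∈ Finset.univ.filter (fun K : Finset (Fin n) => J ⊆ K ∧ K.card = r + 1),
        pminor A K / pminor A J := by
  classical
  set S := A.submatrix (Subtype.val : J → Fin n) (Subtype.val : J → Fin n) with hSdef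
  have hS : IsUnit S.det := isUnit_iff_ne_zero.mpr hJinv
  rw [nuclearNorm_psd_eq_trace _ (residual_posSemidef A hA J hS)]
  have htrace : (A - crossApprox A J).trace = ∑ i ∈ Jᶜ, (A - crossApprox A J) i i := by
    rw [Matrix.trace]
    rw [show (∑ i, (A - crossApprox A J).diag i) = ∑ i : Fin n, (A - crossApprox A J) i i from rfl]
    symm
    apply Finset.sum_subset (Finset.subset_univ Jᶜ)
    intro i _ hic
    have hij : i ∈ J := by simpa using hic
    simp [Matrix.diag, Matrix.sub_apply, crossApprox_row_mem A J hS hij]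
  have hsum : ∑ i ∈ Jᶜ, (A - crossApprox A J) i i
      = ∑ i ∈ Jᶜ, pminor A (insert i J) / pminor A J := by
    refine Finset.sum_congr rfl fun i hi => ?_
    have hiJ : i ∉ J := by simpa using hi
    rw [pminor_insert A J hS hiJ, mul_comm, mul_div_assoc, div_self hJinv, mul_one]
  have hbij : ∑ K ∈ Finset.univ.filter (fun K : Finset (Fin n) => J ⊆ K ∧ K.card = r + 1),
        pminor A K / pminor A J = ∑ i ∈ Jᶜ, pminor A (insert i J) / pminor A J := by
    symm
    apply Finset.sum_bij (fun i _ => insert i J)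
    · intro a ha
      rw [Finset.mem_filter]
      refine ⟨Finset.mem_univ _, Finset.subset_insert _ _, ?_⟩
      rw [Finset.card_insert_of_notMem (by simpa using ha), hJcard]
    · intro a ha b hb hab
      have haJ : a ∉ J := by simpa using ha
      have : a ∈ insert b J := hab ▸ Finset.mem_insert_self a J
      rcases Finset.mem_insert.mp this with h | h
      · exact h
      · exact absurd h haJ
    · intro K hK
      rw [Finset.mem_filter] at hK
      obtain ⟨-, hJK, hKcard⟩ := hK
      have hne : (K \ J).Nonempty := by
        rw [← Finset.card_pos, Finset.card_sdiff_of_subset hJK, hKcard, hJcard]; simp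
      obtain ⟨a, ha⟩ := hne
      have haK := (Finset.mem_sdiff.mp ha).1
      have haJ := (Finset.mem_sdiff.mp ha).2
      refine ⟨a, by simpa using haJ, ?_⟩
      apply Finset.eq_of_subset_of_card_le
      · exact Finset.insert_subset haK hJK
      · rw [hKcard, Finset.card_insert_of_notMem haJ, hJcard]
    · intro a ha; rfl
  rw [htrace, hsum, hbij]
end

section
/- Let A ∈ ℝ^{n×n} be symmetric positive semidefinite, let 1 ≤ t ≤ r ≤ n, and let J_1 = {j_1,…,j_t} ⊆ {1,…,n} be such that A(J_1,J_1) is invertible. Then the sum, over all ordered tuples (j_{t+1},…,j_r) of pairwise distinct indices in {1,…,n} ∖ J_1, of det(A(J,J)) with J = J_1 ∪ {j_{t+1},…,j_r}, equals det(A(J_1,J_1)) · (r−t)! · E_{r−t}(A − A_{J_1}), where E_{r−t}(M) denotes the sum of all (r−t)×(r−t) principal minors of M. -/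
open Matrix Finset

lemma crossApprox_row_s3 {n : ℕ} (A : Matrix (Fin n) (Fin n) ℝ) (J₁ : Finset (Fin n))
    (hu : IsUnit (A.submatrix (Subtype.val : J₁ → Fin n) Subtype.val).det)
    {i : Fin n} (hi : i ∈ J₁) (j : Fin n) : crossApprox A J₁ i j = A i j := by
  set AJ : Matrix J₁ J₁ ℝ := A.submatrix (Subtype.val : J₁ → Fin n) Subtype.val with hAJdef
  have hAJ : AJ * AJ⁻¹ = 1 := Matrix.mul_nonsing_inv _ hu
  have h1 : ∀ q : J₁, (A.submatrix id (Subtype.val : J₁ → Fin n) * AJ⁻¹) i q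
      = (1 : Matrix J₁ J₁ ℝ) ⟨i, hi⟩ q := by
    intro q
    rw [← hAJ, Matrix.mul_apply, Matrix.mul_apply]
    rfl
  show (A.submatrix id (Subtype.val : J₁ → Fin n) * AJ⁻¹ *
      A.submatrix (Subtype.val : J₁ → Fin n) id) i j = A i j
  rw [Matrix.mul_apply]
  simp only [h1, Matrix.one_apply, ite_mul, one_mul, zero_mul]
  rw [Finset.sum_ite_eq Finset.univ (⟨i, hi⟩ : J₁)]
  simp

lemma pminor_sub_cross_eq_zero {n : ℕ} (A : Matrix (Fin n) (Fin n) ℝ) (J₁ : Finset (Fin n))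
    (hu : IsUnit (A.submatrix (Subtype.val : J₁ → Fin n) Subtype.val).det)
    {K : Finset (Fin n)} (hK : ¬ Disjoint J₁ K) :
    pminor (A - crossApprox A J₁) K = 0 := by
  obtain ⟨i, hiJ, hiK⟩ := Finset.not_disjoint_iff.mp hK
  apply Matrix.det_eq_zero_of_row_eq_zero (⟨i, hiK⟩ : K)
  intro j
  simp [Matrix.sub_apply, crossApprox_row_s3 A J₁ hu hiJ]

noncomputable def unionEquiv {n : ℕ} (J₁ K : Finset (Fin n)) (hd : Disjoint J₁ K) :
    (J₁ ⊕ K : Type) ≃ ((J₁ ∪ K : Finset (Fin n)) : Type) where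
  toFun := Sum.elim (fun x => ⟨x.1, Finset.mem_union_left _ x.2⟩)
    (fun x => ⟨x.1, Finset.mem_union_right _ x.2⟩)
  invFun := fun x => if h : x.1 ∈ J₁ then .inl ⟨x.1, h⟩
    else .inr ⟨x.1, (Finset.mem_union.mp x.2).resolve_left h⟩
  left_inv := by
    rintro (⟨x, hx⟩ | ⟨x, hx⟩)
    · simp [hx]
    · have : x ∉ J₁ := fun h => (Finset.disjoint_left.mp hd h) hx
      simp [this]
  right_inv := by
    rintro ⟨x, hx⟩
    by_cases h : x ∈ J₁ <;> simp [h]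

lemma pminor_union {n : ℕ} (A : Matrix (Fin n) (Fin n) ℝ) (J₁ K : Finset (Fin n))
    (hd : Disjoint J₁ K)
    (hu : IsUnit (A.submatrix (Subtype.val : J₁ → Fin n) Subtype.val).det) :
    pminor A (J₁ ∪ K) = pminor A J₁ * pminor (A - crossApprox A J₁) K := by
  classical
  set AJ : Matrix J₁ J₁ ℝ := A.submatrix (Subtype.val : J₁ → Fin n) Subtype.val with hAJdef
  haveI : Invertible AJ := AJ.invertibleOfIsUnitDet hu
  set e := unionEquiv J₁ K hd
  have hsub : (A.submatrix (Subtype.val : (J₁ ∪ K : Finset (Fin n)) → Fin n)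
        Subtype.val).submatrix e e =
      Matrix.fromBlocks AJ (A.submatrix (Subtype.val : J₁ → Fin n) Subtype.val)
        (A.submatrix (Subtype.val : K → Fin n) Subtype.val)
        (A.submatrix (Subtype.val : K → Fin n) Subtype.val) := by
    ext i j
    rcases i with i | i <;> rcases j with j | j <;> rfl
  have h1 : pminor A (J₁ ∪ K) =
      (Matrix.fromBlocks AJ (A.submatrix (Subtype.val : J₁ → Fin n) Subtype.val)
        (A.submatrix (Subtype.val : K → Fin n) Subtype.val)
        (A.submatrix (Subtype.val : K → Fin n) Subtype.val)).det := by
    rw [pminor, ← Matrix.det_submatrix_equiv_self e, hsub]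
  rw [h1, Matrix.det_fromBlocks₁₁, invOf_eq_nonsing_inv]
  congr 1

lemma card_fiber {n k : ℕ} (K : Finset (Fin n)) (hK : K.card = k) :
    (Finset.univ.filter (fun f : Fin k ↪ Fin n => Finset.univ.map f = K)).card
      = Nat.factorial k := by
  classical
  rw [← Fintype.card_subtype]
  have e : {f : Fin k ↪ Fin n // Finset.univ.map f = K} ≃ (Fin k ↪ K) :=
    { toFun := fun f => ⟨fun i => ⟨f.1 i, by
          have h : f.1 i ∈ Finset.univ.map f.1 := Finset.mem_map_of_mem f.1 (Finset.mem_univ i)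
          rwa [f.2] at h⟩,
        fun a b h => f.1.injective (congrArg Subtype.val h)⟩
      invFun := fun g => ⟨⟨fun i => (g i).1, fun a b h => g.injective (Subtype.ext h)⟩, by
        apply Finset.eq_of_subset_of_card_le
        · intro x hx
          simp only [Finset.mem_map, Finset.mem_univ, true_and] at hx
          obtain ⟨i, rfl⟩ := hx
          exact (g i).2
        · rw [hK]
          simp⟩
      left_inv := fun f => Subtype.ext (by ext i; rfl)
      right_inv := fun g => by ext i; rfl }
  rw [Fintype.card_congr e, Fintype.card_embedding_eq]
  simp [Fintype.card_coe, hK, Nat.descFactorial_self]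

/-- For `A` SPSD, `1 ≤ t ≤ r ≤ n` and `J₁` of cardinality `t` with `A(J₁,J₁)`
invertible, the sum over all ordered tuples of `r - t` pairwise distinct indices outside `J₁`
(i.e. over embeddings `Fin (r-t) ↪ Fin n` avoiding `J₁`) of `det A(J,J)` with
`J = J₁ ∪ {tuple}` equals `det A(J₁,J₁) · (r-t)! · E_{r-t}(A - A_{J₁})`. -/
theorem sum_minors_extending_eq_det_mul_Esum {n r t : ℕ}
    (A : Matrix (Fin n) (Fin n) ℝ) (hA : A.PosSemidef)
    (ht : 1 ≤ t) (htr : t ≤ r) (hrn : r ≤ n)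
    (J₁ : Finset (Fin n)) (hJ₁card : J₁.card = t) (hJ₁inv : pminor A J₁ ≠ 0) :
    ∑ f ∈ Finset.univ.filter (fun f : Fin (r - t) ↪ Fin n => ∀ i, f i ∉ J₁),
        pminor A (J₁ ∪ Finset.univ.map f) =
      pminor A J₁ * (Nat.factorial (r - t) : ℝ) * Esum (A - crossApprox A J₁) (r - t) := by
  classical
  set k := r - t with hk
  have hu : IsUnit (A.submatrix (Subtype.val : J₁ → Fin n) Subtype.val).det :=
    isUnit_iff_ne_zero.mpr hJ₁inv
  set P : (Fin k ↪ Fin n) → Prop := fun f => ∀ i, f i ∉ J₁ with hP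
  have maps : ∀ f ∈ Finset.univ.filter P, Finset.univ.map f ∈ Finset.powersetCard k J₁ᶜ := by
    intro f hf
    rw [Finset.mem_filter] at hf
    rw [Finset.mem_powersetCard]
    constructor
    · intro x hx
      simp only [Finset.mem_map, Finset.mem_univ, true_and] at hx
      obtain ⟨i, rfl⟩ := hx
      exact Finset.mem_compl.mpr (hf.2 i)
    · simp
  rw [← Finset.sum_fiberwise_of_maps_to maps]
  have hfiber : ∀ K ∈ Finset.powersetCard k J₁ᶜ,
      (∑ f ∈ (Finset.univ.filter P).filter (fun f => Finset.univ.map f = K),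
        pminor A (J₁ ∪ Finset.univ.map f)) = (Nat.factorial k : ℝ) * pminor A (J₁ ∪ K) := by
    intro K hK
    rw [Finset.mem_powersetCard] at hK
    have hKcard : K.card = k := hK.2
    have hfeq : (Finset.univ.filter P).filter (fun f => Finset.univ.map f = K)
        = Finset.univ.filter (fun f : Fin k ↪ Fin n => Finset.univ.map f = K) := by
      rw [Finset.filter_filter]
      apply Finset.filter_congr
      intro f _
      constructor
      · exact fun h => h.2
      · intro h
        refine ⟨fun i => ?_, h⟩
        have : f i ∈ K := by
          rw [← h]; exact Finset.mem_map_of_mem f (Finset.mem_univ i)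
        exact Finset.mem_compl.mp (hK.1 this)
    calc (∑ f ∈ (Finset.univ.filter P).filter (fun f => Finset.univ.map f = K),
          pminor A (J₁ ∪ Finset.univ.map f))
        = ∑ _f ∈ (Finset.univ.filter P).filter (fun f => Finset.univ.map f = K),
          pminor A (J₁ ∪ K) :=
        Finset.sum_congr rfl (fun f hf => by rw [(Finset.mem_filter.mp hf).2])
      _ = (Nat.factorial k : ℝ) * pminor A (J₁ ∪ K) := by
        rw [Finset.sum_const, hfeq, card_fiber K hKcard, nsmul_eq_mul]
  rw [Finset.sum_congr rfl hfiber]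
  have hEsum : Esum (A - crossApprox A J₁) k
      = ∑ K ∈ Finset.powersetCard k J₁ᶜ, pminor (A - crossApprox A J₁) K := by
    rw [Esum]
    symm
    apply Finset.sum_subset (Finset.powersetCard_mono (Finset.subset_univ _))
    intro K hKu hK
    rw [Finset.mem_powersetCard] at hKu hK
    have : ¬ K ⊆ J₁ᶜ := fun h => hK ⟨h, hKu.2⟩
    obtain ⟨x, hxK, hxJ⟩ := Finset.not_subset.mp this
    exact pminor_sub_cross_eq_zero A J₁ hu (Finset.not_disjoint_iff.mpr
      ⟨x, Finset.notMem_compl.mp hxJ, hxK⟩)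
  rw [hEsum, Finset.mul_sum]
  apply Finset.sum_congr rfl
  intro K hK
  rw [Finset.mem_powersetCard] at hK
  have hd : Disjoint J₁ K := Finset.disjoint_left.mpr
    (fun {a} ha haK => Finset.mem_compl.mp (hK.1 haK) ha)
  rw [pminor_union A J₁ K hd hu]
  ring
end

section
/- Let A ∈ ℝ^{n×n} be symmetric positive semidefinite of rank k, and let 1 ≤ r ≤ k. Then there exists an index set J* ⊆ {1,…,n} with |J*| = r such that A(J*,J*) is invertible and ‖A − A_{J*}‖_* ≤ (r+1) · Σ_{s=r+1}^{n} σ_s(A). -/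
open Matrix Finset

open Matrix Finset

lemma qoc_perm_sum {R : Type*} [CommRing R] {n : ℕ} (M : Matrix (Fin n) (Fin n) R)
    (t : Finset (Fin n)) :
    ∑ σ ∈ univ.filter (fun σ : Equiv.Perm (Fin n) => ∀ i, i ∉ t → σ i = i),
        ((Equiv.Perm.sign σ : ℤ) : R) * ∏ i ∈ t, M (σ i) i
      = (M.submatrix (Subtype.val : t → Fin n) (Subtype.val : t → Fin n)).det := by
  rw [Matrix.det_apply']
  rw [Finset.sum_subtype (p := fun σ : Equiv.Perm (Fin n) => ∀ i, i ∉ t → σ i = i)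
    _ (by intro x; simp) ]
  refine (Fintype.sum_equiv (Equiv.Perm.subtypeEquivSubtypePerm (· ∈ t)) _ _ ?_).symm
  intro τ
  have hco : ((Equiv.Perm.subtypeEquivSubtypePerm (· ∈ t)) τ : Equiv.Perm (Fin n))
      = Equiv.Perm.ofSubtype τ := rfl
  have hprod : ∏ i ∈ t, M ((Equiv.Perm.ofSubtype τ) i) i
      = ∏ j : {x // x ∈ t},
          (M.submatrix (Subtype.val : t → Fin n) (Subtype.val : t → Fin n)) (τ j) j := by
    rw [← Finset.prod_coe_sort t (fun i => M ((Equiv.Perm.ofSubtype τ) i) i)]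
    refine Finset.prod_congr rfl ?_
    intro j _
    rw [Matrix.submatrix_apply, Equiv.Perm.ofSubtype_apply_of_mem τ j.2]
  rw [hco, Equiv.Perm.sign_ofSubtype, hprod]

lemma qoc_prod_ite_fix {R : Type*} [CommRing R] (x : R) {n : ℕ} (σ : Equiv.Perm (Fin n))
    (t : Finset (Fin n)) :
    (∏ i ∈ t, (if σ i = i then x else 0)) = if (∀ i ∈ t, σ i = i) then x ^ t.card else 0 := by
  split_ifs with h
  · rw [Finset.prod_congr rfl (fun i hi => if_pos (h i hi)), Finset.prod_const]
  · push_neg at h; obtain ⟨i, hi, hne⟩ := h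
    exact Finset.prod_eq_zero hi (if_neg hne)

lemma qoc_det_smul_one_add {R : Type*} [CommRing R] {n : ℕ} (x : R)
    (M : Matrix (Fin n) (Fin n) R) :
    (x • (1 : Matrix (Fin n) (Fin n) R) + M).det
      = ∑ K ∈ (univ : Finset (Fin n)).powerset,
          x ^ (n - K.card) *
            (M.submatrix (Subtype.val : K → Fin n) (Subtype.val : K → Fin n)).det := by
  rw [Matrix.det_apply']
  have hentry : ∀ (σ : Equiv.Perm (Fin n)) (i : Fin n),
      (x • (1 : Matrix (Fin n) (Fin n) R) + M) (σ i) i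
        = M (σ i) i + (if σ i = i then x else 0) := by
    intro σ i
    simp [Matrix.add_apply, Matrix.smul_apply, Matrix.one_apply, smul_eq_mul, mul_ite, add_comm]
  have hprod : ∀ σ : Equiv.Perm (Fin n),
      (∏ i, (x • (1 : Matrix (Fin n) (Fin n) R) + M) (σ i) i)
        = ∑ t ∈ (univ : Finset (Fin n)).powerset,
            (∏ i ∈ t, M (σ i) i) * (if ∀ i ∈ univ \ t, σ i = i then x ^ (univ \ t).card else 0) := by
    intro σ
    rw [Finset.prod_congr rfl (fun i _ => hentry σ i), Finset.prod_add]
    exact Finset.sum_congr rfl fun t _ => by rw [qoc_prod_ite_fix]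
  calc ∑ σ : Equiv.Perm (Fin n), ((Equiv.Perm.sign σ : ℤ) : R) * ∏ i, (x • 1 + M) (σ i) i
      = ∑ σ : Equiv.Perm (Fin n), ∑ t ∈ (univ : Finset (Fin n)).powerset,
          ((Equiv.Perm.sign σ : ℤ) : R) * ((∏ i ∈ t, M (σ i) i) *
            (if ∀ i ∈ univ \ t, σ i = i then x ^ (univ \ t).card else 0)) := by
        refine Finset.sum_congr rfl fun σ _ => ?_
        rw [hprod σ, Finset.mul_sum]
    _ = ∑ t ∈ (univ : Finset (Fin n)).powerset, ∑ σ : Equiv.Perm (Fin n),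
          ((Equiv.Perm.sign σ : ℤ) : R) * ((∏ i ∈ t, M (σ i) i) *
            (if ∀ i ∈ univ \ t, σ i = i then x ^ (univ \ t).card else 0)) := by
        exact Finset.sum_comm
    _ = ∑ t ∈ (univ : Finset (Fin n)).powerset,
          x ^ (n - t.card) *
            (M.submatrix (Subtype.val : t → Fin n) (Subtype.val : t → Fin n)).det := by
        refine Finset.sum_congr rfl fun t ht => ?_
        have hcard : (univ \ t).card = n - t.card := by
          rw [Finset.card_sdiff_of_subset (Finset.subset_univ t), Finset.card_univ, Fintype.card_fin]
        rw [← qoc_perm_sum M t, Finset.sum_filter, Finset.mul_sum]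
        refine Finset.sum_congr rfl fun σ _ => ?_
        have hcond : (∀ i ∈ univ \ t, σ i = i) ↔ (∀ i, i ∉ t → σ i = i) := by
          constructor
          · intro h i hi; exact h i (Finset.mem_sdiff.mpr ⟨Finset.mem_univ i, hi⟩)
          · intro h i hi; exact h i (Finset.mem_sdiff.mp hi).2
        by_cases h : ∀ i, i ∉ t → σ i = i
        · rw [if_pos (hcond.mpr h), if_pos h, hcard]; ring
        · rw [if_neg (fun hh => h (hcond.mp hh)), if_neg h]; ring

open Polynomial in
lemma qoc_det_conj {R : Type*} [CommRing R] {m : Type*} [Fintype m] [DecidableEq m]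
    (x : R) (U V N : Matrix m m R) (hUV : U * V = 1) (hVU : V * U = 1) :
    (x • (1 : Matrix m m R) + U * N * V).det = (x • (1 : Matrix m m R) + N).det := by
  have key : x • (1 : Matrix m m R) + U * N * V = U * (x • (1 : Matrix m m R) + N) * V := by
    rw [Matrix.mul_add, Matrix.add_mul, Matrix.mul_smul, Matrix.mul_one, Matrix.smul_mul, hUV]
  rw [key, Matrix.det_mul, Matrix.det_mul, mul_comm, ← mul_assoc, ← Matrix.det_mul, hVU,
    Matrix.det_one, one_mul]

lemma qoc_spectral {m : ℕ} {A : Matrix (Fin m) (Fin m) ℝ} (hA : A.IsHermitian) :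
    A = (hA.eigenvectorUnitary : Matrix (Fin m) (Fin m) ℝ) * diagonal hA.eigenvalues *
        star (hA.eigenvectorUnitary : Matrix (Fin m) (Fin m) ℝ) := by
  have h := hA.spectral_theorem
  have : (RCLike.ofReal ∘ hA.eigenvalues : Fin m → ℝ) = hA.eigenvalues := rfl
  rwa [this] at h

open Polynomial in
lemma qoc_det_poly_diag {m : ℕ} (U : Matrix (Fin m) (Fin m) ℝ)
    (hU : U ∈ Matrix.unitaryGroup (Fin m) ℝ) (d : Fin m → ℝ) (c : ℝ) :
    ((X : ℝ[X]) • (1 : Matrix (Fin m) (Fin m) ℝ[X]) +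
        ((c • (U * diagonal d * star U)).map (Polynomial.C : ℝ →+* ℝ[X]))).det
      = ∏ i, ((X : ℝ[X]) + Polynomial.C (c * d i)) := by
  have hmap : ∀ M N : Matrix (Fin m) (Fin m) ℝ,
      (M * N).map (Polynomial.C : ℝ →+* ℝ[X]) =
        M.map (Polynomial.C : ℝ →+* ℝ[X]) * N.map (Polynomial.C : ℝ →+* ℝ[X]) := by
    intro M N
    exact Matrix.map_mul
  have hc : c • (U * diagonal d * star U) = U * diagonal (fun i => c * d i) * star U := by
    have h1 : U * diagonal (fun i => c * d i) * star U = c • (U * diagonal d * star U) := by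
      rw [show (fun i => c * d i) = c • d from rfl, Matrix.diagonal_smul, mul_smul_comm,
        smul_mul_assoc]
    exact h1.symm
  rw [hc, hmap, hmap]
  rw [qoc_det_conj _ _ _ _ ?h1 ?h2]
  case h1 =>
    rw [← hmap, (Matrix.mem_unitaryGroup_iff).mp hU, Matrix.map_one _ (map_zero _) (map_one _)]
  case h2 =>
    rw [← hmap, (Matrix.mem_unitaryGroup_iff').mp hU, Matrix.map_one _ (map_zero _) (map_one _)]
  rw [Matrix.diagonal_map (map_zero _), Matrix.smul_one_eq_diagonal, Matrix.diagonal_add,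
    Matrix.det_diagonal]

open Polynomial in
lemma qoc_det_poly_sub {m : ℕ} (U : Matrix (Fin m) (Fin m) ℝ)
    (hU : U ∈ Matrix.unitaryGroup (Fin m) ℝ) (d : Fin m → ℝ) (M : Matrix (Fin m) (Fin m) ℝ)
    (hM : M = U * diagonal d * star U) :
    ((X : ℝ[X]) • (1 : Matrix (Fin m) (Fin m) ℝ[X]) - M.map (Polynomial.C : ℝ →+* ℝ[X])).det
      = ∏ i, ((X : ℝ[X]) - Polynomial.C (d i)) := by
  have h := qoc_det_poly_diag U hU d (-1)
  have hneg : (((-1 : ℝ) • (U * diagonal d * star U)).map (Polynomial.C : ℝ →+* ℝ[X]))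
      = -(M.map (Polynomial.C : ℝ →+* ℝ[X])) := by
    rw [hM]
    ext i j
    simp only [Matrix.map_apply, Matrix.smul_apply, smul_eq_mul, neg_one_mul, map_neg,
      Matrix.neg_apply]
  rw [hneg] at h
  rw [sub_eq_add_neg, h]
  refine Finset.prod_congr rfl fun i _ => ?_
  rw [neg_one_mul, map_neg, sub_eq_add_neg]

open Polynomial in
lemma qoc_eigen_multiset {m : ℕ} {M : Matrix (Fin m) (Fin m) ℝ} (hM : M.IsHermitian)
    (U : Matrix (Fin m) (Fin m) ℝ) (hU : U ∈ Matrix.unitaryGroup (Fin m) ℝ) (d : Fin m → ℝ)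
    (hdec : M = U * diagonal d * star U) :
    (univ : Finset (Fin m)).val.map hM.eigenvalues = (univ : Finset (Fin m)).val.map d := by
  have h1 := qoc_det_poly_sub (hM.eigenvectorUnitary : Matrix (Fin m) (Fin m) ℝ)
    hM.eigenvectorUnitary.2 hM.eigenvalues M (qoc_spectral hM)
  have h2 := qoc_det_poly_sub U hU d M hdec
  have hqe : ∀ f : Fin m → ℝ, ∏ i, ((X : ℝ[X]) - Polynomial.C (f i))
      = (((univ : Finset (Fin m)).val.map f).map (fun a => (X : ℝ[X]) - Polynomial.C a)).prod := by
    intro f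
    rw [Finset.prod_eq_multiset_prod, Multiset.map_map]
    rfl
  have : (((univ : Finset (Fin m)).val.map hM.eigenvalues).map
        (fun a => (X : ℝ[X]) - Polynomial.C a)).prod
      = (((univ : Finset (Fin m)).val.map d).map
        (fun a => (X : ℝ[X]) - Polynomial.C a)).prod := by
    rw [← hqe, ← hqe, ← h1, ← h2]
  have := congrArg Polynomial.roots this
  rwa [Polynomial.roots_multiset_prod_X_sub_C, Polynomial.roots_multiset_prod_X_sub_C] at this

lemma qoc_trace_eq_sum_eigenvalues {m : ℕ} {A : Matrix (Fin m) (Fin m) ℝ}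
    (hA : A.IsHermitian) : A.trace = ∑ i, hA.eigenvalues i := by
  conv_lhs => rw [qoc_spectral hA]
  rw [Matrix.trace_mul_cycle,
    (Matrix.mem_unitaryGroup_iff').mp hA.eigenvectorUnitary.2, Matrix.one_mul,
    Matrix.trace_diagonal]


lemma qoc_nuclear_eq_trace {m : ℕ} {E : Matrix (Fin m) (Fin m) ℝ} (hE : E.PosSemidef) :
    nuclearNorm E = E.trace := by
  classical
  set U : Matrix (Fin m) (Fin m) ℝ := (hE.1.eigenvectorUnitary : Matrix (Fin m) (Fin m) ℝ)
    with hUdef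
  set d := hE.1.eigenvalues with hddef
  have hsq : Eᴴ * E = U * diagonal (fun i => d i * d i) * star U := by
    have h := qoc_spectral hE.1
    have h2 : Eᴴ * E = E * E := by rw [hE.1]
    rw [h2]
    conv_lhs => rw [h]
    calc (U * diagonal d * star U) * (U * diagonal d * star U)
        = U * diagonal d * ((star U * U) * (diagonal d * star U)) := by
          simp only [Matrix.mul_assoc]
      _ = U * (diagonal d * diagonal d) * star U := by
          rw [(Matrix.mem_unitaryGroup_iff').mp hE.1.eigenvectorUnitary.2, Matrix.one_mul]
          simp only [Matrix.mul_assoc]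
      _ = U * diagonal (fun i => d i * d i) * star U := by
          rw [Matrix.diagonal_mul_diagonal]
  have hmul := qoc_eigen_multiset (Matrix.isHermitian_conjTranspose_mul_self E) U
    hE.1.eigenvectorUnitary.2 (fun i => d i * d i) hsq
  unfold nuclearNorm
  have hst : ∀ (f : Fin m → ℝ), ∑ i, Real.sqrt (f i)
      = (((univ : Finset (Fin m)).val.map f).map Real.sqrt).sum := by
    intro f
    rw [Multiset.map_map, Finset.sum]
    rfl
  rw [hst, hmul, ← hst, qoc_trace_eq_sum_eigenvalues hE.1]
  exact Finset.sum_congr rfl fun i _ => Real.sqrt_mul_self (hE.eigenvalues_nonneg i)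



open Polynomial in
lemma qoc_esum_eq {n : ℕ} {A : Matrix (Fin n) (Fin n) ℝ} (hA : A.IsHermitian) {k : ℕ}
    (hk : k ≤ n) :
    Esum A k = ∑ K ∈ Finset.powersetCard k (univ : Finset (Fin n)), ∏ i ∈ K, hA.eigenvalues i := by
  classical
  have hpoly : ((X : ℝ[X]) • (1 : Matrix (Fin n) (Fin n) ℝ[X])
        + (A.map (Polynomial.C : ℝ →+* ℝ[X]))).det
      = ∏ i, ((X : ℝ[X]) + Polynomial.C (hA.eigenvalues i)) := by
    have h := qoc_det_poly_diag _ hA.eigenvectorUnitary.2 hA.eigenvalues 1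
    rw [one_smul, ← qoc_spectral hA] at h
    simpa using h
  have hexp := qoc_det_smul_one_add (X : ℝ[X]) (A.map (Polynomial.C : ℝ →+* ℝ[X]))
  have hexp2 : ((X : ℝ[X]) • (1 : Matrix (Fin n) (Fin n) ℝ[X])
        + (A.map (Polynomial.C : ℝ →+* ℝ[X]))).det
      = ∑ K ∈ (univ : Finset (Fin n)).powerset,
          (X : ℝ[X]) ^ (n - K.card) * Polynomial.C (pminor A K) := by
    rw [hexp]
    refine Finset.sum_congr rfl fun K _ => ?_
    rw [Matrix.submatrix_map]
    exact congrArg (fun p => (X : ℝ[X]) ^ (n - K.card) * p)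
      (RingHom.map_det (Polynomial.C : ℝ →+* ℝ[X]) _).symm
  have hco := congrArg (fun p => Polynomial.coeff p (n - k)) (hexp2.symm.trans hpoly)
  have hL : (∑ K ∈ (univ : Finset (Fin n)).powerset,
        (X : ℝ[X]) ^ (n - K.card) * Polynomial.C (pminor A K)).coeff (n - k) = Esum A k := by
    rw [Polynomial.finset_sum_coeff]
    have hterm : ∀ K ∈ (univ : Finset (Fin n)).powerset,
        ((X : ℝ[X]) ^ (n - K.card) * Polynomial.C (pminor A K)).coeff (n - k)
          = if K.card = k then pminor A K else 0 := by
      intro K _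
      have hKn : K.card ≤ n := by
        simpa using Finset.card_le_univ K
      rw [mul_comm, Polynomial.coeff_C_mul, Polynomial.coeff_X_pow]
      by_cases h : K.card = k
      · rw [if_pos (by omega), if_pos h, mul_one]
      · rw [if_neg (by omega), if_neg h, mul_zero]
    rw [Finset.sum_congr rfl hterm, ← Finset.sum_filter, Esum, Finset.powersetCard_eq_filter]
  have hR : (∏ i, ((X : ℝ[X]) + Polynomial.C (hA.eigenvalues i))).coeff (n - k)
      = ∑ K ∈ Finset.powersetCard k (univ : Finset (Fin n)), ∏ i ∈ K, hA.eigenvalues i := by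
    have hcard : n - k ≤ (univ : Finset (Fin n)).card := by
      simp only [Finset.card_univ, Fintype.card_fin]
      omega
    rw [Finset.prod_X_add_C_coeff (univ : Finset (Fin n)) hA.eigenvalues hcard]
    congr 1
    rw [Finset.card_univ, Fintype.card_fin]
    congr 1
    omega
  rw [← hL, hco, hR]


lemma qoc_pminor_nonneg {n : ℕ} {A : Matrix (Fin n) (Fin n) ℝ} (hA : A.PosSemidef)
    (K : Finset (Fin n)) : 0 ≤ pminor A K := by
  have h := hA.submatrix (Subtype.val : K → Fin n)
  have hd := h.1.det_eq_prod_eigenvalues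
  rw [pminor, hd]
  exact Finset.prod_nonneg fun i _ => h.eigenvalues_nonneg i

lemma qoc_cross_row {n : ℕ} {A : Matrix (Fin n) (Fin n) ℝ} {J : Finset (Fin n)}
    (hdet : pminor A J ≠ 0) {i : Fin n} (hi : i ∈ J) (j : Fin n) :
    crossApprox A J i j = A i j := by
  set S := A.submatrix (Subtype.val : J → Fin n) (Subtype.val : J → Fin n) with hS
  have h0 : crossApprox A J i j
      = ((S * S⁻¹) * A.submatrix (Subtype.val : J → Fin n) id) ⟨i, hi⟩ j := rfl
  rw [h0, Matrix.mul_nonsing_inv S (isUnit_iff_ne_zero.mpr hdet), Matrix.one_mul]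
  rfl

lemma qoc_diff_diag_zero {n : ℕ} {A : Matrix (Fin n) (Fin n) ℝ} {J : Finset (Fin n)}
    (hdet : pminor A J ≠ 0) {i : Fin n} (hi : i ∈ J) :
    (A - crossApprox A J) i i = 0 := by
  rw [Matrix.sub_apply, qoc_cross_row hdet hi, sub_self]

open scoped MatrixOrder in
lemma qoc_diff_posSemidef {n : ℕ} {A : Matrix (Fin n) (Fin n) ℝ} (hA : A.PosSemidef)
    {J : Finset (Fin n)} (hdet : pminor A J ≠ 0) :
    (A - crossApprox A J).PosSemidef := by
  obtain ⟨B, hB⟩ : ∃ B : Matrix (Fin n) (Fin n) ℝ, A = Bᴴ * B := CStarAlgebra.nonneg_iff_eq_star_mul_self.mp hA.nonneg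
  set BJ := B.submatrix id (Subtype.val : J → Fin n) with hBJ
  set S := A.submatrix (Subtype.val : J → Fin n) (Subtype.val : J → Fin n) with hSdef
  have hS : S = BJᴴ * BJ := by
    rw [hSdef, hB]
    rfl
  have hdet' : IsUnit S.det := isUnit_iff_ne_zero.mpr hdet
  set G := S⁻¹ with hG
  set P := BJ * G * BJᴴ with hP
  have hSH : Sᴴ = S := by
    rw [hS, Matrix.conjTranspose_mul, Matrix.conjTranspose_conjTranspose]
  have hGH : Gᴴ = G := by
    rw [hG, Matrix.conjTranspose_nonsing_inv, hSH]
  have hPH : Pᴴ = P := by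
    rw [hP, Matrix.conjTranspose_mul, Matrix.conjTranspose_mul,
      Matrix.conjTranspose_conjTranspose, hGH, Matrix.mul_assoc]
  have hGS : G * S = 1 := Matrix.nonsing_inv_mul S hdet'
  have hPP : P * P = P := by
    rw [hP]
    calc BJ * G * BJᴴ * (BJ * G * BJᴴ) = BJ * G * (BJᴴ * BJ) * (G * BJᴴ) := by
          simp only [Matrix.mul_assoc]
      _ = BJ * (G * S) * (G * BJᴴ) := by rw [← hS]; simp only [Matrix.mul_assoc]
      _ = BJ * G * BJᴴ := by rw [hGS, Matrix.mul_one, Matrix.mul_assoc]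
  have hcross : crossApprox A J = Bᴴ * (P * B) := by
    have h1 : A.submatrix id (Subtype.val : J → Fin n) = Bᴴ * BJ := by rw [hB]; rfl
    have h2 : A.submatrix (Subtype.val : J → Fin n) id = BJᴴ * B := by rw [hB]; rfl
    rw [crossApprox, h1, h2, ← hSdef, ← hG, hP]
    simp only [Matrix.mul_assoc]
  have hdiff : A - crossApprox A J = (B - P * B)ᴴ * (B - P * B) := by
    have e1 : (B - P * B)ᴴ * (B - P * B)
        = (Bᴴ * B - Bᴴ * (P * B)) - ((Bᴴ * P) * B - (Bᴴ * P) * (P * B)) := by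
      rw [Matrix.conjTranspose_sub, Matrix.conjTranspose_mul, hPH, Matrix.sub_mul,
        Matrix.mul_sub, Matrix.mul_sub]
    have e2 : (Bᴴ * P) * (P * B) = (Bᴴ * P) * B := by
      rw [← Matrix.mul_assoc, Matrix.mul_assoc Bᴴ P P, hPP]
    have e3 : (Bᴴ * P) * B = Bᴴ * (P * B) := Matrix.mul_assoc _ _ _
    rw [e1, e2, sub_self, sub_zero, hcross, hB]
  rw [hdiff]
  exact Matrix.posSemidef_conjTranspose_mul_self _

lemma qoc_det_insert {n : ℕ} {A : Matrix (Fin n) (Fin n) ℝ} {J : Finset (Fin n)}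
    (hdet : pminor A J ≠ 0) {i : Fin n} (hi : i ∉ J) :
    pminor A (insert i J) = pminor A J * ((A - crossApprox A J) i i) := by
  classical
  set K := insert i J with hK
  let e : (↥J ⊕ Unit) ≃ ↥K :=
    { toFun := Sum.elim (fun j => ⟨j.1, Finset.mem_insert_of_mem j.2⟩)
        (fun _ => ⟨i, Finset.mem_insert_self i J⟩)
      invFun := fun k => if h : (k : Fin n) ∈ J then Sum.inl ⟨k, h⟩ else Sum.inr ()
      left_inv := by
        rintro (j | u)
        · simp
        · simp [hi]
      right_inv := by
        rintro ⟨k, hk⟩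
        by_cases h : k ∈ J
        · simp [h]
        · have hki : k = i := by
            rcases Finset.mem_insert.mp hk with h1 | h1
            · exact h1
            · exact absurd h1 h
          subst hki
          simp [hi] }
  set S := A.submatrix (Subtype.val : J → Fin n) (Subtype.val : J → Fin n) with hSdef
  haveI : Invertible S := S.invertibleOfIsUnitDet (isUnit_iff_ne_zero.mpr hdet)
  have hdetK : pminor A K
      = ((A.submatrix (Subtype.val : K → Fin n) (Subtype.val : K → Fin n)).submatrix e e).det :=
    (Matrix.det_submatrix_equiv_self e _).symm
  have hblock : (A.submatrix (Subtype.val : K → Fin n) (Subtype.val : K → Fin n)).submatrix e e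
      = Matrix.fromBlocks S
          (Matrix.of fun (j : ↥J) (_ : Unit) => A j i)
          (Matrix.of fun (_ : Unit) (j : ↥J) => A i j)
          (Matrix.of fun (_ : Unit) (_ : Unit) => A i i) := by
    ext x y
    rcases x with x | x <;> rcases y with y | y <;> rfl
  rw [hdetK, hblock, Matrix.det_fromBlocks₁₁]
  congr 1
  rw [Matrix.det_unique]
  have hcc : ((Matrix.of fun (_ : Unit) (j : ↥J) => A i j) * ⅟S *
      (Matrix.of fun (j : ↥J) (_ : Unit) => A j i)) default default = crossApprox A J i i := by
    rw [invOf_eq_nonsing_inv]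
    rfl
  rw [Matrix.sub_apply, hcc, Matrix.sub_apply]
  rfl


lemma qoc_sortedDesc_eq {m : ℕ} (f : Fin m → ℝ) :
    sortedDesc f = fun i => f ((Tuple.sort (fun j => -f j)) i) := by
  funext i
  simp [sortedDesc]

lemma qoc_sortedDesc_antitone {m : ℕ} (f : Fin m → ℝ) : Antitone (sortedDesc f) := by
  intro a b hab
  have h := Tuple.monotone_sort (fun j => -f j) hab
  simp only [sortedDesc, Function.comp_apply] at *
  linarith

lemma qoc_esymm_perm {n : ℕ} (f : Fin n → ℝ) (σ : Equiv.Perm (Fin n)) (k : ℕ) :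
    ∑ K ∈ Finset.powersetCard k (univ : Finset (Fin n)), ∏ i ∈ K, f (σ i)
      = ∑ K ∈ Finset.powersetCard k (univ : Finset (Fin n)), ∏ i ∈ K, f i := by
  refine Finset.sum_nbij' (fun K => K.map σ.toEmbedding) (fun K => K.map σ.symm.toEmbedding)
    ?_ ?_ ?_ ?_ ?_
  · intro K hK
    rw [Finset.mem_powersetCard_univ, Finset.card_map,
      ← Finset.mem_powersetCard_univ]
    exact hK
  · intro K hK
    rw [Finset.mem_powersetCard_univ, Finset.card_map, ← Finset.mem_powersetCard_univ]
    exact hK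
  · intro K _
    ext x
    simp
  · intro K _
    ext x
    simp
  · intro K _
    rw [Finset.prod_map]
    rfl

lemma qoc_esymm_tail {n r : ℕ} (μ : Fin n → ℝ) (hnn : ∀ i, 0 ≤ μ i) (hmono : Antitone μ) :
    ∑ K ∈ Finset.powersetCard (r+1) (univ : Finset (Fin n)), ∏ i ∈ K, μ i
      ≤ (∑ s ∈ univ.filter (fun s : Fin n => r ≤ (s : ℕ)), μ s) *
        (∑ K ∈ Finset.powersetCard r (univ : Finset (Fin n)), ∏ i ∈ K, μ i) := by
  classical
  rcases Nat.eq_zero_or_pos n with hn | hn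
  · subst hn
    have h1 : Finset.powersetCard (r+1) (univ : Finset (Fin 0)) = ∅ :=
      Finset.powersetCard_eq_empty.mpr (by simp)
    have h2 : (univ : Finset (Fin 0)).filter (fun s : Fin 0 => r ≤ (s : ℕ)) = ∅ := by
      ext x; exact absurd x.2 (by omega)
    rw [h1, h2]
    simp
  haveI : Inhabited (Fin n) := ⟨⟨0, hn⟩⟩
  set t := (univ.filter (fun s : Fin n => r ≤ (s : ℕ))) ×ˢ
    Finset.powersetCard r (univ : Finset (Fin n)) with ht
  have hφ : ∀ K ∈ Finset.powersetCard (r+1) (univ : Finset (Fin n)), K.Nonempty := by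
    intro K hK
    rw [Finset.mem_powersetCard_univ] at hK
    exact Finset.card_pos.mp (by omega)
  set φ : Finset (Fin n) → (Fin n × Finset (Fin n)) := fun K =>
    if h : K.Nonempty then (K.max' h, K.erase (K.max' h)) else (default, ∅) with hφdef
  have hstep : ∑ K ∈ Finset.powersetCard (r+1) (univ : Finset (Fin n)), ∏ i ∈ K, μ i
      = ∑ K ∈ Finset.powersetCard (r+1) (univ : Finset (Fin n)),
          μ (φ K).1 * ∏ i ∈ (φ K).2, μ i := by
    refine Finset.sum_congr rfl fun K hK => ?_
    have h := hφ K hK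
    rw [hφdef]
    simp only [dif_pos h]
    exact (Finset.mul_prod_erase K μ (Finset.max'_mem K h)).symm
  rw [hstep]
  have hinj : ∀ x ∈ Finset.powersetCard (r+1) (univ : Finset (Fin n)),
      ∀ y ∈ Finset.powersetCard (r+1) (univ : Finset (Fin n)), φ x = φ y → x = y := by
    intro x hx y hy hxy
    have hxne := hφ x hx
    have hyne := hφ y hy
    have ex : insert (φ x).1 (φ x).2 = x := by
      rw [hφdef]; simp only [dif_pos hxne]
      exact Finset.insert_erase (Finset.max'_mem x hxne)
    have ey : insert (φ y).1 (φ y).2 = y := by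
      rw [hφdef]; simp only [dif_pos hyne]
      exact Finset.insert_erase (Finset.max'_mem y hyne)
    rw [← ex, ← ey, hxy]
  have himg : ∀ K ∈ Finset.powersetCard (r+1) (univ : Finset (Fin n)), φ K ∈ t := by
    intro K hK
    have h := hφ K hK
    have hcard := Finset.mem_powersetCard_univ.mp hK
    rw [hφdef]
    simp only [dif_pos h]
    rw [ht, Finset.mem_product]
    constructor
    · rw [Finset.mem_filter]
      refine ⟨Finset.mem_univ _, ?_⟩
      have hsub : K ⊆ Finset.Iic (K.max' h) := by
        intro x hx
        exact Finset.mem_Iic.mpr (Finset.le_max' K x hx)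
      have h2 := Finset.card_le_card hsub
      rw [Fin.card_Iic] at h2
      simp only []
      omega
    · rw [Finset.mem_powersetCard_univ, Finset.card_erase_of_mem (Finset.max'_mem K h), hcard]
      omega
  calc ∑ K ∈ Finset.powersetCard (r+1) (univ : Finset (Fin n)),
        μ (φ K).1 * ∏ i ∈ (φ K).2, μ i
      = ∑ p ∈ (Finset.powersetCard (r+1) (univ : Finset (Fin n))).image φ,
          μ p.1 * ∏ i ∈ p.2, μ i := (Finset.sum_image (f := fun p => μ p.1 * ∏ i ∈ p.2, μ i) hinj).symm
    _ ≤ ∑ p ∈ t, μ p.1 * ∏ i ∈ p.2, μ i := by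
        refine Finset.sum_le_sum_of_subset_of_nonneg ?_ ?_
        · intro p hp
          obtain ⟨K, hK, rfl⟩ := Finset.mem_image.mp hp
          exact himg K hK
        · intro p _ _
          exact mul_nonneg (hnn _) (Finset.prod_nonneg fun i _ => hnn i)
    _ = (∑ s ∈ univ.filter (fun s : Fin n => r ≤ (s : ℕ)), μ s) *
        (∑ K ∈ Finset.powersetCard r (univ : Finset (Fin n)), ∏ i ∈ K, μ i) := by
        rw [Finset.sum_mul_sum, ht, Finset.sum_product]

lemma qoc_double_count {n r : ℕ} (f : Finset (Fin n) → ℝ) :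
    ∑ J ∈ Finset.powersetCard r (univ : Finset (Fin n)), ∑ i ∈ Jᶜ, f (insert i J)
      = (r + 1 : ℝ) * ∑ K ∈ Finset.powersetCard (r+1) (univ : Finset (Fin n)), f K := by
  classical
  rw [Finset.sum_sigma' (Finset.powersetCard r (univ : Finset (Fin n)))
    (fun J => Jᶜ) (fun J i => f (insert i J))]
  have hrhs : ∑ K ∈ Finset.powersetCard (r+1) (univ : Finset (Fin n)), ∑ i ∈ K, f K
      = (r + 1 : ℝ) * ∑ K ∈ Finset.powersetCard (r+1) (univ : Finset (Fin n)), f K := by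
    rw [Finset.mul_sum]
    refine Finset.sum_congr rfl fun K hK => ?_
    rw [Finset.sum_const, Finset.mem_powersetCard_univ.mp hK, nsmul_eq_mul]
    push_cast
    ring
  rw [← hrhs, Finset.sum_sigma' (Finset.powersetCard (r+1) (univ : Finset (Fin n)))
    (fun K => K) (fun K _ => f K)]
  refine Finset.sum_nbij' (fun x => ⟨insert x.2 x.1, x.2⟩) (fun y => ⟨y.1.erase y.2, y.2⟩)
    ?_ ?_ ?_ ?_ ?_
  · rintro ⟨J, i⟩ hx
    rw [Finset.mem_sigma] at hx ⊢
    obtain ⟨hJ, hiJ⟩ := hx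
    have hiJ' : i ∉ J := Finset.mem_compl.mp hiJ
    refine ⟨?_, Finset.mem_insert_self i J⟩
    rw [Finset.mem_powersetCard_univ, Finset.card_insert_of_notMem hiJ',
      Finset.mem_powersetCard_univ.mp hJ]
  · rintro ⟨K, i⟩ hy
    rw [Finset.mem_sigma] at hy ⊢
    obtain ⟨hK, hiK⟩ := hy
    constructor
    · rw [Finset.mem_powersetCard_univ, Finset.card_erase_of_mem hiK,
        Finset.mem_powersetCard_univ.mp hK]
      omega
    · exact Finset.mem_compl.mpr (Finset.notMem_erase i K)
  · rintro ⟨J, i⟩ hx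
    rw [Finset.mem_sigma] at hx
    have hiJ' : i ∉ J := Finset.mem_compl.mp hx.2
    simp only
    congr 1
    exact Finset.erase_insert hiJ'
  · rintro ⟨K, i⟩ hy
    rw [Finset.mem_sigma] at hy
    simp only
    congr 1
    exact Finset.insert_erase hy.2
  · rintro ⟨J, i⟩ _
    rfl

lemma qoc_esum_eq' {n : ℕ} {A : Matrix (Fin n) (Fin n) ℝ} (hA : A.IsHermitian) (k : ℕ) :
    Esum A k = ∑ K ∈ Finset.powersetCard k (univ : Finset (Fin n)), ∏ i ∈ K, hA.eigenvalues i := by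
  rcases le_or_gt k n with hk | hk
  · exact qoc_esum_eq hA hk
  · have h : Finset.powersetCard k (univ : Finset (Fin n)) = ∅ :=
      Finset.powersetCard_eq_empty.mpr (by simpa using hk)
    rw [Esum, h]
    simp

lemma qoc_esum_pos {n r : ℕ} {A : Matrix (Fin n) (Fin n) ℝ} (hA : A.PosSemidef)
    (hrk : r ≤ A.rank) : 0 < Esum A r := by
  classical
  rw [qoc_esum_eq' hA.1 r]
  have hrank := hA.1.rank_eq_card_non_zero_eigs
  rw [hrank, Fintype.card_subtype] at hrk
  obtain ⟨K₀, hK₀sub, hK₀card⟩ := Finset.exists_subset_card_eq hrk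
  refine Finset.sum_pos' (fun K _ => Finset.prod_nonneg fun i _ => hA.eigenvalues_nonneg i)
    ⟨K₀, Finset.mem_powersetCard_univ.mpr hK₀card, ?_⟩
  refine Finset.prod_pos fun i hi => ?_
  have := (Finset.mem_filter.mp (hK₀sub hi)).2
  exact lt_of_le_of_ne (hA.eigenvalues_nonneg i) (Ne.symm this)

lemma qoc_select {n r : ℕ} {A : Matrix (Fin n) (Fin n) ℝ} (hA : A.PosSemidef)
    (hpos : 0 < Esum A r) :
    ∃ J ∈ Finset.powersetCard r (univ : Finset (Fin n)), pminor A J ≠ 0 ∧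
      Esum A r * (∑ i ∈ Jᶜ, pminor A (insert i J))
        ≤ ((r : ℝ) + 1) * Esum A (r+1) * pminor A J := by
  classical
  by_contra hcon
  push_neg at hcon
  -- sums over all J of both sides are equal
  have hsum1 : ∑ J ∈ Finset.powersetCard r (univ : Finset (Fin n)),
      Esum A r * (∑ i ∈ Jᶜ, pminor A (insert i J))
        = ((r : ℝ) + 1) * Esum A (r+1) * Esum A r := by
    rw [← Finset.mul_sum, qoc_double_count (fun K => pminor A K)]
    simp only [Esum]
    ring
  have hsum2 : ∑ J ∈ Finset.powersetCard r (univ : Finset (Fin n)),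
      ((r : ℝ) + 1) * Esum A (r+1) * pminor A J
        = ((r : ℝ) + 1) * Esum A (r+1) * Esum A r := by
    rw [← Finset.mul_sum]
    rfl
  -- there is some J with positive minor
  have hex : ∃ J₀ ∈ Finset.powersetCard r (univ : Finset (Fin n)), pminor A J₀ ≠ 0 := by
    by_contra hall
    push_neg at hall
    have : Esum A r = 0 := Finset.sum_eq_zero fun J hJ => hall J hJ
    exact absurd this (ne_of_gt hpos)
  obtain ⟨J₀, hJ₀mem, hJ₀ne⟩ := hex
  have hlt : ∑ J ∈ Finset.powersetCard r (univ : Finset (Fin n)),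
      ((r : ℝ) + 1) * Esum A (r+1) * pminor A J
        < ∑ J ∈ Finset.powersetCard r (univ : Finset (Fin n)),
            Esum A r * (∑ i ∈ Jᶜ, pminor A (insert i J)) := by
    refine Finset.sum_lt_sum ?_ ⟨J₀, hJ₀mem, ?_⟩
    · intro J hJ
      by_cases h : pminor A J = 0
      · rw [h, mul_zero]
        exact mul_nonneg (le_of_lt hpos)
          (Finset.sum_nonneg fun i _ => qoc_pminor_nonneg hA _)
      · exact le_of_lt (hcon J hJ h)
    · exact hcon J₀ hJ₀mem hJ₀ne
  rw [hsum1, hsum2] at hlt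
  exact lt_irrefl _ hlt


/-- For `A` SPSD of rank `k` and `1 ≤ r ≤ k`, there is an index set `J*` of
cardinality `r` with `A(J*,J*)` invertible and
`‖A - A_{J*}‖_* ≤ (r+1) ∑_{s=r+1}^{n} σ_s(A)` (0-based: indices `s ≥ r`). -/
theorem exists_quasi_optimal_cross_nuclear {n r : ℕ}
    (A : Matrix (Fin n) (Fin n) ℝ) (hA : A.PosSemidef)
    (hr : 1 ≤ r) (hrk : r ≤ A.rank) :
    ∃ J : Finset (Fin n), J.card = r ∧ pminor A J ≠ 0 ∧
      nuclearNorm (A - crossApprox A J) ≤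
        (r + 1 : ℝ) * ∑ s ∈ Finset.univ.filter (fun s : Fin n => r ≤ (s : ℕ)),
          sortedDesc hA.1.eigenvalues s := by
  classical
  set lam := hA.1.eigenvalues with hlam
  set μ := sortedDesc lam with hmu
  set σp := Tuple.sort (fun j => -lam j) with hσ
  have hμeq : μ = fun i => lam (σp i) := qoc_sortedDesc_eq lam
  have hμnn : ∀ i, 0 ≤ μ i := by
    intro i
    rw [hμeq]
    exact hA.eigenvalues_nonneg _
  have hμanti : Antitone μ := qoc_sortedDesc_antitone lam
  set T := ∑ s ∈ Finset.univ.filter (fun s : Fin n => r ≤ (s : ℕ)), μ s with hT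
  have hTnn : 0 ≤ T := Finset.sum_nonneg fun s _ => hμnn s
  have hEr : 0 < Esum A r := qoc_esum_pos hA hrk
  have htail : Esum A (r+1) ≤ T * Esum A r := by
    rw [qoc_esum_eq' hA.1 (r+1), qoc_esum_eq' hA.1 r]
    have h1 : ∀ k, ∑ K ∈ Finset.powersetCard k (univ : Finset (Fin n)), ∏ i ∈ K, lam i
        = ∑ K ∈ Finset.powersetCard k (univ : Finset (Fin n)), ∏ i ∈ K, μ i := by
      intro k
      rw [← qoc_esymm_perm lam σp k]
      refine Finset.sum_congr rfl fun K _ => Finset.prod_congr rfl fun i _ => ?_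
      rw [hμeq]
    rw [h1 (r+1), h1 r]
    exact qoc_esymm_tail μ hμnn hμanti
  obtain ⟨J, hJmem, hJne, hkey⟩ := qoc_select hA hEr
  have hJcard : J.card = r := Finset.mem_powersetCard_univ.mp hJmem
  refine ⟨J, hJcard, hJne, ?_⟩
  have hpm : 0 < pminor A J := lt_of_le_of_ne (qoc_pminor_nonneg hA J) (Ne.symm hJne)
  set E := A - crossApprox A J with hE
  have hEpsd : E.PosSemidef := qoc_diff_posSemidef hA hJne
  rw [qoc_nuclear_eq_trace hEpsd]
  have htr : pminor A J * E.trace = ∑ i ∈ Jᶜ, pminor A (insert i J) := by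
    rw [Matrix.trace]
    have hsplit : ∑ i, E.diag i = ∑ i ∈ J, E.diag i + ∑ i ∈ Jᶜ, E.diag i :=
      (Finset.sum_add_sum_compl J _).symm
    rw [hsplit]
    have hz : ∑ i ∈ J, E.diag i = 0 :=
      Finset.sum_eq_zero fun i hi => qoc_diff_diag_zero hJne hi
    rw [hz, zero_add, Finset.mul_sum]
    exact Finset.sum_congr rfl fun i hi =>
      (qoc_det_insert hJne (Finset.mem_compl.mp hi)).symm
  have hfin : pminor A J * E.trace * Esum A r
      ≤ pminor A J * (((r : ℝ) + 1) * T) * Esum A r := by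
    calc pminor A J * E.trace * Esum A r
        = Esum A r * (∑ i ∈ Jᶜ, pminor A (insert i J)) := by rw [htr]; ring
      _ ≤ ((r : ℝ) + 1) * Esum A (r+1) * pminor A J := hkey
      _ ≤ ((r : ℝ) + 1) * (T * Esum A r) * pminor A J := by
          refine mul_le_mul_of_nonneg_right
            (mul_le_mul_of_nonneg_left htail (by positivity)) (le_of_lt hpm)
      _ = pminor A J * (((r : ℝ) + 1) * T) * Esum A r := by ring
  have h1 := le_of_mul_le_mul_right hfin hEr
  exact (mul_le_mul_iff_right₀ hpm).mp h1
end

section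
/- Let A ∈ ℝ^{n×n} be symmetric, J = {j_1,…,j_r} ⊆ {1,…,n} with A(J,J) invertible, i ∈ {1,…,r}, and h ∈ {1,…,n} ∖ J. Let Ĵ be obtained from J by replacing j_i with h. Define D := A(J,J)^{-1}, B := A(:,J)D, and C_{hh} := B(h,:)·A(J,h). Then det(A(Ĵ,Ĵ)) / det(A(J,J)) = −det( [[D_{ii}, B_{hi}], [B_{hi}, C_{hh} − A_{hh}]] ). -/
open Matrix Finset

/-- determinant-update formula. For `A` symmetric, `J` of cardinality `r` with
`A(J,J)` invertible, `j ∈ J`, `h ∉ J` and `Ĵ = (J \ {j}) ∪ {h}`, with `D = A(J,J)⁻¹`,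
`B = A(:,J) D` and `C_hh = B(h,:)·A(J,h)`, one has
`det A(Ĵ,Ĵ) / det A(J,J) = -det [[D_jj, B_hj], [B_hj, C_hh - A_hh]]`. -/
theorem det_ratio_index_swap {n r : ℕ} (A : Matrix (Fin n) (Fin n) ℝ) (hA : A.IsSymm)
    (J : Finset (Fin n)) (hJcard : J.card = r) (hJinv : pminor A J ≠ 0)
    (j : Fin n) (hj : j ∈ J) (h : Fin n) (hh : h ∉ J) :
    let D := (A.submatrix (Subtype.val : J → Fin n) (Subtype.val : J → Fin n))⁻¹
    let B := A.submatrix id (Subtype.val : J → Fin n) * D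
    let Chh := ∑ k : J, B h k * A k.1 h
    pminor A (insert h (J.erase j)) / pminor A J =
      -Matrix.det !![D ⟨j, hj⟩ ⟨j, hj⟩, B h ⟨j, hj⟩; B h ⟨j, hj⟩, Chh - A h h] := by
  intro D B Chh
  classical
  set M := A.submatrix (Subtype.val : J → Fin n) (Subtype.val : J → Fin n) with hMdef
  have hdetM : M.det ≠ 0 := hJinv
  have hUnit : IsUnit M.det := isUnit_iff_ne_zero.mpr hdetM
  set j' : J := ⟨j, hj⟩ with hj'def
  have hMsymm : ∀ k l : J, M k l = M l k := by
    intro k l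
    have := congrFun (congrFun hA l.1) k.1
    simpa [Matrix.transpose_apply, hMdef] using this
  have hAsymm : ∀ a b : Fin n, A a b = A b a := by
    intro a b
    have := congrFun (congrFun hA b) a
    simpa [Matrix.transpose_apply] using this
  have hDsymm : ∀ k l : J, D k l = D l k := by
    intro k l
    have hMT : Mᵀ = M := by ext a b; simp [Matrix.transpose_apply, hMsymm]
    have : Dᵀ = D := by
      show (M⁻¹)ᵀ = M⁻¹
      rw [Matrix.transpose_nonsing_inv, hMT]
    exact (congrFun (congrFun this k) l).symm ▸ rfl
  have hMD : M * D = 1 := Matrix.mul_nonsing_inv M hUnit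
  have hDM : D * M = 1 := Matrix.nonsing_inv_mul M hUnit
  have hhj : h ≠ j := fun e => hh (e ▸ hj)
  -- the index equivalence
  set Jh : Finset (Fin n) := insert h (J.erase j) with hJh
  have hmemh : h ∈ Jh := Finset.mem_insert_self _ _
  obtain ⟨e, hval⟩ : ∃ e : (J : Type) ≃ (Jh : Type),
      ∀ k : J, ((e k : Jh) : Fin n) = if (k : Fin n) = j then h else (k : Fin n) := by
    refine ⟨Equiv.mk
      (fun k => if hk : (k : Fin n) = j then ⟨h, hmemh⟩ else
        ⟨k, Finset.mem_insert_of_mem (Finset.mem_erase.mpr ⟨hk, k.2⟩)⟩)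
      (fun k => if hk : (k : Fin n) = h then j' else
        ⟨k, Finset.mem_of_mem_erase ((Finset.mem_insert.mp k.2).resolve_left hk)⟩)
      ?_ ?_, ?_⟩
    · intro k
      by_cases hk : (k : Fin n) = j
      · simp [hk, Subtype.ext_iff, hj'def]
      · have hkh : (k : Fin n) ≠ h := fun e => hh (e ▸ k.2)
        simp [hk, hkh]
    · intro k
      by_cases hk : (k : Fin n) = h
      · refine Subtype.ext ?_
        simp [hk, hj'def, hhj]
      · have hkj : (k : Fin n) ≠ j := by
          intro e
          exact (Finset.mem_erase.mp ((Finset.mem_insert.mp k.2).resolve_left hk)).1 e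
        simp [hk, hkj, Subtype.ext_iff]
    · intro k
      by_cases hk : (k : Fin n) = j <;> simp [hk]
  -- rank-2 update data
  set w : J → ℝ := fun k => A h k - A j k with hw
  set α : ℝ := A h h + A j j - 2 * A j h with hα
  set U : Matrix J (Fin 2) ℝ := fun k t => if t = 0 then (if k = j' then 1 else 0) else w k
    with hU
  set V : Matrix (Fin 2) J ℝ :=
    fun t l => if t = 0 then (α * (if l = j' then 1 else 0) + w l) else (if l = j' then 1 else 0)
    with hV
  have hkiff : ∀ k : J, (k = j') ↔ ((k : Fin n) = j) := by
    intro k; simp [hj'def, Subtype.ext_iff]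
  have hsub : A.submatrix ((Subtype.val : Jh → Fin n) ∘ e) ((Subtype.val : Jh → Fin n) ∘ e)
      = M + U * V := by
    ext k l
    rw [Matrix.add_apply, Matrix.mul_apply]
    simp only [Matrix.submatrix_apply, Function.comp_apply, Matrix.add_apply, Matrix.mul_apply,
      hval, hU, hV, hMdef, hw, hα, Fin.sum_univ_two,
      show ((0 : Fin 2) = 0) = True by simp, show ((1 : Fin 2) = 0) = False by simp,
      if_true, if_false]
    by_cases hk : (k : Fin n) = j <;> by_cases hl : (l : Fin n) = j
    · simp only [hk, hl, if_true, if_pos ((hkiff k).mpr hk), if_pos ((hkiff l).mpr hl)]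
      rw [show A j h = A h j from hAsymm j h]; ring
    · simp only [hk, hl, if_true, if_false, if_pos ((hkiff k).mpr hk),
        if_neg (fun hc => hl ((hkiff l).mp hc))]
      ring
    · simp only [hk, hl, if_true, if_false, if_pos ((hkiff l).mpr hl),
        if_neg (fun hc => hk ((hkiff k).mp hc))]
      rw [show A k.1 h = A h k.1 from hAsymm _ _, show A k.1 j = A j k.1 from hAsymm _ _]; ring
    · simp only [hk, hl, if_false, if_neg (fun hc => hk ((hkiff k).mp hc)),
        if_neg (fun hc => hl ((hkiff l).mp hc))]
      ring
  have hnum : pminor A Jh = M.det * (1 + V * M⁻¹ * U).det := by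
    have h1 : pminor A Jh
        = (A.submatrix ((Subtype.val : Jh → Fin n) ∘ e) ((Subtype.val : Jh → Fin n) ∘ e)).det := by
      unfold pminor
      rw [← Matrix.submatrix_submatrix]
      exact (Matrix.det_submatrix_equiv_self e _).symm
    rw [h1, hsub]
    exact Matrix.det_add_mul U V hUnit
  -- final computation
  have hDeq : D = M⁻¹ := by rw [hMdef]
  have hden : pminor A J = M.det := by rw [hMdef]; rfl
  have hDsymm' : ∀ k l : J, M⁻¹ k l = M⁻¹ l k := by
    intro k l; rw [← hDeq]; exact hDsymm k l
  have hB : ∀ l : J, B h l = ∑ k : J, A h ↑k * M⁻¹ k l := by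
    intro l
    rw [show B = A.submatrix id (Subtype.val : J → Fin n) * M⁻¹ by rw [← hDeq],
      Matrix.mul_apply]
    rfl
  have hMDentry : ∀ a c : J, (∑ k : J, A ↑a ↑k * M⁻¹ k c) = if a = c then 1 else 0 := by
    intro a c
    have h2 := congrFun (congrFun hMD a) c
    rw [Matrix.mul_apply] at h2
    simpa [hMdef, Matrix.one_apply] using h2
  have hDMentry : ∀ a c : J, (∑ k : J, M⁻¹ a k * A ↑k ↑c) = if a = c then 1 else 0 := by
    intro a c
    have h2 := congrFun (congrFun hDM a) c
    rw [Matrix.mul_apply] at h2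
    simpa [hMdef, Matrix.one_apply] using h2
  set Z : Matrix (Fin 2) (Fin 2) ℝ := 1 + V * M⁻¹ * U with hZdef
  have hZ : ∀ t s : Fin 2, Z t s
      = (if t = s then 1 else 0) + ∑ l : J, V t l * (∑ m : J, M⁻¹ l m * U m s) := by
    intro t s
    simp only [hZdef, Matrix.add_apply, Matrix.mul_assoc, Matrix.mul_apply, Matrix.one_apply]
  set b : ℝ := B h j' with hbdef
  set d : ℝ := M⁻¹ j' j' with hddef
  have hinner0 : ∀ l : J, (∑ m : J, M⁻¹ l m * U m 0) = M⁻¹ l j' := by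
    intro l
    simp [hU, mul_ite, Finset.sum_ite_eq']
  have hg : ∀ l : J, (∑ m : J, M⁻¹ l m * U m 1)
      = (∑ m : J, M⁻¹ l m * A h ↑m) - (if l = j' then 1 else 0) := by
    intro l
    have : (∑ m : J, M⁻¹ l m * U m 1)
        = (∑ m : J, M⁻¹ l m * A h ↑m) - ∑ m : J, M⁻¹ l m * A ↑m ↑j' := by
      rw [← Finset.sum_sub_distrib]
      refine Finset.sum_congr rfl fun m _ => ?_
      simp only [hU, hw, show ((1 : Fin 2) = 0) = False by simp, if_false]
      rw [show A ↑m ↑j' = A j ↑m from hAsymm _ _]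
      ring
    rw [this, hDMentry l j']
  have hS1 : (∑ l : J, w l * M⁻¹ l j') = b - 1 := by
    have : (∑ l : J, w l * M⁻¹ l j')
        = (∑ l : J, A h ↑l * M⁻¹ l j') - ∑ l : J, A ↑j' ↑l * M⁻¹ l j' := by
      rw [← Finset.sum_sub_distrib]
      refine Finset.sum_congr rfl fun l _ => ?_
      simp only [hw]; ring
    rw [this, hMDentry j' j', if_pos rfl, hbdef, hB j']
  have hS2 : (∑ l : J, M⁻¹ j' l * A h ↑l) = b := by
    rw [hbdef, hB j']
    refine Finset.sum_congr rfl fun l _ => ?_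
    rw [hDsymm' j' l]; ring
  have hT1 : (∑ l : J, A h ↑l * ∑ m : J, M⁻¹ l m * A h ↑m) = Chh := by
    have hC : Chh = ∑ k : J, B h k * A ↑k h := rfl
    rw [hC]
    simp only [Finset.mul_sum]
    rw [Finset.sum_comm]
    refine Finset.sum_congr rfl fun m _ => ?_
    rw [hB m, Finset.sum_mul, show A ↑m h = A h ↑m from hAsymm _ _]
    refine Finset.sum_congr rfl fun l _ => ?_
    ring
  have hT2 : (∑ l : J, A j ↑l * ∑ m : J, M⁻¹ l m * A h ↑m) = A h j := by
    simp only [Finset.mul_sum]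
    rw [Finset.sum_comm]
    have h5 : ∀ m : J, (∑ l : J, A j ↑l * (M⁻¹ l m * A h ↑m))
        = (if j' = m then 1 else 0) * A h ↑m := by
      intro m
      rw [← hMDentry j' m, Finset.sum_mul]
      refine Finset.sum_congr rfl fun l _ => ?_
      ring
    rw [Finset.sum_congr rfl fun m _ => h5 m]
    simp [ite_mul, Finset.sum_ite_eq, hj'def]
  -- entries of Z
  have hZ00 : Z 0 0 = 1 + α * d + (b - 1) := by
    rw [hZ 0 0, if_pos rfl]
    have hsum : (∑ l : J, V 0 l * (∑ m : J, M⁻¹ l m * U m 0))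
        = α * d + ∑ l : J, w l * M⁻¹ l j' := by
      rw [show (∑ l : J, V 0 l * (∑ m : J, M⁻¹ l m * U m 0))
          = ∑ l : J, (α * (if l = j' then 1 else 0) + w l) * M⁻¹ l j' from
        Finset.sum_congr rfl fun l _ => by rw [hinner0 l]; simp [hV]]
      rw [show (∑ l : J, (α * (if l = j' then 1 else 0) + w l) * M⁻¹ l j')
          = (∑ l : J, α * ((if l = j' then 1 else 0) * M⁻¹ l j')) + ∑ l : J, w l * M⁻¹ l j' by
        rw [← Finset.sum_add_distrib]; exact Finset.sum_congr rfl fun l _ => by ring]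
      simp [ite_mul, Finset.mul_sum, Finset.sum_ite_eq', hddef]
    rw [hsum, hS1]
    ring
  have hZ10 : Z 1 0 = d := by
    rw [hZ 1 0, if_neg (by decide)]
    have : (∑ l : J, V 1 l * (∑ m : J, M⁻¹ l m * U m 0))
        = ∑ l : J, (if l = j' then 1 else 0) * M⁻¹ l j' := by
      refine Finset.sum_congr rfl fun l _ => ?_
      rw [hinner0 l]
      simp [hV]
    rw [this]
    simp [ite_mul, Finset.sum_ite_eq', hddef]
  have hZ11 : Z 1 1 = 1 + (b - 1) := by
    rw [hZ 1 1, if_pos rfl]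
    congr 1
    have : (∑ l : J, V 1 l * (∑ m : J, M⁻¹ l m * U m 1))
        = ∑ m : J, M⁻¹ j' m * U m 1 := by
      rw [show (∑ l : J, V 1 l * (∑ m : J, M⁻¹ l m * U m 1))
          = ∑ l : J, (if l = j' then 1 else 0) * (∑ m : J, M⁻¹ l m * U m 1) from
        Finset.sum_congr rfl fun l _ => by simp [hV]]
      simp [ite_mul, Finset.sum_ite_eq']
    rw [this, hg j', if_pos rfl, hS2]
  have hZ01 : Z 0 1 = α * (b - 1) + (Chh - 2 * A h j + A j j) := by
    rw [hZ 0 1, if_neg (by decide)]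
    have h1 : (∑ l : J, V 0 l * (∑ m : J, M⁻¹ l m * U m 1))
        = ∑ l : J, (α * (if l = j' then 1 else 0) + w l)
            * ((∑ m : J, M⁻¹ l m * A h ↑m) - (if l = j' then 1 else 0)) := by
      refine Finset.sum_congr rfl fun l _ => ?_
      rw [hg l]
      simp [hV]
    rw [h1]
    have h2 : (∑ l : J, (α * (if l = j' then 1 else 0) + w l)
            * ((∑ m : J, M⁻¹ l m * A h ↑m) - (if l = j' then 1 else 0)))
        = (∑ l : J, (if l = j' then α * ((∑ m : J, M⁻¹ l m * A h ↑m) - 1) - w l else 0))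
          + ∑ l : J, (A h ↑l * (∑ m : J, M⁻¹ l m * A h ↑m)
              - A j ↑l * (∑ m : J, M⁻¹ l m * A h ↑m)) := by
      rw [← Finset.sum_add_distrib]
      refine Finset.sum_congr rfl fun l _ => ?_
      by_cases hl : l = j' <;> simp only [hl, if_true, if_false, hw] <;> ring
    rw [h2, Finset.sum_sub_distrib, hT1, hT2, Finset.sum_ite_eq' Finset.univ j'
      (fun l => α * ((∑ m : J, M⁻¹ l m * A h ↑m) - 1) - w l), if_pos (Finset.mem_univ j'),
      hS2]
    have hwj : w j' = A h j - A j j := by rw [hw, hj'def]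
    rw [hwj]
    ring
  -- put it together
  rw [hnum, hden, mul_comm, mul_div_assoc, div_self hdetM, mul_one,
    Matrix.det_fin_two, hZ00, hZ01, hZ10, hZ11, Matrix.det_fin_two_of,
    show D j' j' = d by rw [hDeq, hddef], hα, show A j h = A h j from hAsymm j h]
  ring
end
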